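/- arXiv:1807.04571 — 6 statements merged into one kernel-verified Lean document; each statement's English description precedes it below -/
import Mathlib

section
/- For every n ≥ 1, m ∈ ℝ, there exists a constant A₀ > 0 such that for every multi-index γ and every y ∈ ℝⁿ \ {0}: |∂^γ |y|^m| ≤ A₀^{|γ|+1} |γ|! |y|^{m-|γ|}. -/
open Real
open scoped BigOperators

noncomputable section

abbrev E (n : ℕ) := EuclideanSpace ℝ (Fin n)

/-- Partial derivative in the `i`-th coordinate direction. -/
def pd {n : ℕ} (i : Fin n) (f : E n → ℝ) : E n → ℝ :=
  fun x => fderiv ℝ f x (EuclideanSpace.single i 1)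

/-- Multi-index partial derivative `∂^γ`. -/
def mderiv {n : ℕ} (γ : Fin n → ℕ) (f : E n → ℝ) : E n → ℝ :=
  (List.finRange n).foldr (fun i g => (pd i)^[γ i] g) f

namespace Stmt2Aux
variable {n : ℕ}
def deg (α : Fin n → ℕ) : ℕ := ∑ i, α i
def nsq (y : E n) : ℝ := ∑ i, y i ^ 2

lemma nsq_nonneg (y : E n) : 0 ≤ nsq y := Finset.sum_nonneg fun i _ => sq_nonneg _

lemma norm_eq_sqrt_nsq (y : E n) : ‖y‖ = Real.sqrt (nsq y) := by
  rw [EuclideanSpace.norm_eq]; congr 1; unfold nsq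
  exact Finset.sum_congr rfl fun i _ => by rw [Real.norm_eq_abs, sq_abs]

lemma norm_rpow_eq (y : E n) (r : ℝ) : ‖y‖ ^ r = nsq y ^ (r / 2) := by
  rw [norm_eq_sqrt_nsq, Real.sqrt_eq_rpow, ← Real.rpow_mul (nsq_nonneg y)]
  ring_nf

lemma nsq_pos {y : E n} (hy : y ≠ 0) : 0 < nsq y := by
  have h : 0 < ‖y‖ := norm_pos_iff.mpr hy
  rcases (nsq_nonneg y).lt_or_eq with h'|h'
  · exact h'
  · rw [norm_eq_sqrt_nsq, ← h', Real.sqrt_zero] at h; exact absurd h (lt_irrefl 0)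

lemma abs_coord_le_norm (y : E n) (i : Fin n) : |y i| ≤ ‖y‖ := by
  rw [norm_eq_sqrt_nsq, ← Real.sqrt_sq_eq_abs]
  exact Real.sqrt_le_sqrt (Finset.single_le_sum (f := fun i => y i ^ 2)
    (fun i _ => sq_nonneg _) (Finset.mem_univ i))



def term (m : ℝ) (k : ℕ) (p : ℝ × (Fin n → ℕ)) (y : E n) : ℝ :=
  p.1 * (∏ i, y i ^ p.2 i) * ‖y‖ ^ (m - k - deg p.2 : ℝ)

def step (m : ℝ) (k : ℕ) (j : Fin n) (p : ℝ × (Fin n → ℕ)) : List (ℝ × (Fin n → ℕ)) :=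
  [(p.1 * p.2 j, Function.update p.2 j (p.2 j - 1)),
   (p.1 * (m - k - deg p.2), Function.update p.2 j (p.2 j + 1))]

-- derivative of coordinate power
lemma coordPow_hasFDerivAt (i : Fin n) (a : ℕ) (y : E n) :
    HasFDerivAt (fun y : E n => y i ^ a)
      (((a : ℝ) * y i ^ (a - 1)) • (EuclideanSpace.proj i : E n →L[ℝ] ℝ)) y := by
  have h1 : HasFDerivAt (fun y : E n => y i) (EuclideanSpace.proj (𝕜 := ℝ) i) y :=
    (EuclideanSpace.proj (𝕜 := ℝ) i).hasFDerivAt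
  exact (hasDerivAt_pow a (y i)).comp_hasFDerivAt y h1

lemma nsq_hasFDerivAt (y : E n) :
    HasFDerivAt (nsq (n := n)) (∑ i, (2 * y i) • (EuclideanSpace.proj i : E n →L[ℝ] ℝ)) y := by
  have : HasFDerivAt (nsq (n := n))
      (∑ i, (((2:ℕ):ℝ) * y i ^ (2 - 1)) • (EuclideanSpace.proj i : E n →L[ℝ] ℝ)) y :=
    HasFDerivAt.fun_sum (u := (Finset.univ : Finset (Fin n)))
    (fun i _ => coordPow_hasFDerivAt i 2 y)
  convert this using 2 with i
  norm_num

lemma deg_update_add (α : Fin n → ℕ) (j : Fin n) :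
    deg (Function.update α j (α j + 1)) = deg α + 1 := by
  unfold deg
  rw [Finset.sum_update_of_mem (Finset.mem_univ j)]
  rw [Finset.sum_eq_add_sum_sdiff_singleton_of_mem (Finset.mem_univ j) α]
  ring

lemma deg_update_sub (α : Fin n → ℕ) (j : Fin n) (s : ℕ) (h : α j = s + 1) :
    deg (Function.update α j s) + 1 = deg α := by
  unfold deg
  rw [Finset.sum_update_of_mem (Finset.mem_univ j)]
  rw [Finset.sum_eq_add_sum_sdiff_singleton_of_mem (Finset.mem_univ j) α, h]
  ring

lemma prod_update (y : E n) (α : Fin n → ℕ) (j : Fin n) (b : ℕ) :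
    ∏ i, y i ^ (Function.update α j b) i = y j ^ b * ∏ i ∈ Finset.univ.erase j, y i ^ α i := by
  rw [← Finset.mul_prod_erase Finset.univ _ (Finset.mem_univ j), Function.update_self]
  congr 1
  exact Finset.prod_congr rfl fun i hi =>
    by rw [Function.update_of_ne (Finset.ne_of_mem_erase hi)]

lemma term_deriv (m : ℝ) (k : ℕ) (p : ℝ × (Fin n → ℕ)) {y : E n} (hy : y ≠ 0) :
    ∃ D : E n →L[ℝ] ℝ, HasFDerivAt (term m k p) D y ∧
      ∀ j, D (EuclideanSpace.single j 1) =
        ((step m k j p).map (fun q => term m (k + 1) q y)).sum := by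
  obtain ⟨c, α⟩ := p
  set r : ℝ := m - k - deg α with hr
  have hfun : term m k (c, α) = fun y : E n => c * ((∏ i, y i ^ α i) * nsq y ^ (r / 2)) := by
    funext z
    rw [term, norm_rpow_eq, mul_assoc]
  have hP := HasFDerivAt.finset_prod (u := (Finset.univ : Finset (Fin n)))
    (fun i _ => coordPow_hasFDerivAt i (α i) y)
  have hQ := (Real.hasDerivAt_rpow_const (x := nsq y) (p := r / 2)
    (Or.inl (nsq_pos hy).ne')).comp_hasFDerivAt y (nsq_hasFDerivAt y)
  have hT := (hP.mul hQ).const_mul c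
  refine ⟨_, by rw [hfun]; exact hT, ?_⟩
  intro j
  have hproj : ∀ i : Fin n, (EuclideanSpace.proj (𝕜 := ℝ) i) (EuclideanSpace.single j (1:ℝ))
      = if i = j then 1 else 0 := by
    intro i
    simp [EuclideanSpace.single_apply]
  simp only [ContinuousLinearMap.smul_apply, ContinuousLinearMap.add_apply,
    ContinuousLinearMap.coe_sum', Finset.sum_apply, ContinuousLinearMap.coe_smul',
    Pi.smul_apply, hproj, smul_eq_mul, mul_ite, mul_one, mul_zero,
    Finset.sum_ite_eq', Finset.mem_univ, if_true]
  simp only [Function.comp_apply, step, List.map_cons, List.map_nil, List.sum_cons,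
    List.sum_nil, add_zero, ← hr]
  have hPsplit : (∏ x : Fin n, y x ^ α x) = y j ^ α j * ∏ x ∈ Finset.univ.erase j, y x ^ α x :=
    (Finset.mul_prod_erase _ _ (Finset.mem_univ j)).symm
  have hadd : term m (k+1) (c * r, Function.update α j (α j + 1)) y
      = c * r * (y j ^ (α j + 1) * ∏ x ∈ Finset.univ.erase j, y x ^ α x)
        * nsq y ^ (r/2 - 1) := by
    simp only [term, prod_update, norm_rpow_eq, deg_update_add]
    rw [show (m - ((k+1:ℕ):ℝ) - ((deg α + 1 : ℕ):ℝ)) / 2 = r/2 - 1 by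
      rw [hr]; push_cast; ring]
  rw [hadd]
  rcases Nat.eq_zero_or_eq_succ_pred (α j) with h0 | hs
  · rw [h0] at hPsplit ⊢
    rw [show term m (k+1) (c * ((0:ℕ):ℝ), Function.update α j (0 - 1)) y = 0 by simp [term]]
    simp only [hPsplit, Nat.cast_zero, Function.comp_apply, norm_rpow_eq]
    ring
  · set s := (α j).pred with hsdef
    have hs' : α j = s + 1 := hs
    have hdeg : deg (Function.update α j s) + 1 = deg α := deg_update_sub α j s hs'
    have hsub : term m (k+1) (c * (α j : ℕ), Function.update α j (α j - 1)) y
        = c * (α j : ℝ) * (y j ^ s * ∏ x ∈ Finset.univ.erase j, y x ^ α x)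
          * nsq y ^ (r/2) := by
      simp only [term, hs', Nat.add_sub_cancel, prod_update, norm_rpow_eq]
      rw [show (m - ((k+1:ℕ):ℝ) - ((deg (Function.update α j s) : ℕ):ℝ)) / 2 = r/2 by
        rw [hr, ← hdeg]; push_cast; ring]
    rw [hsub, hPsplit, hs']
    simp only [norm_rpow_eq]
    push_cast
    ring

def sumT (m : ℝ) (k : ℕ) (L : List (ℝ × (Fin n → ℕ))) (y : E n) : ℝ :=
  (L.map fun p => term m k p y).sum

def wt (L : List (ℝ × (Fin n → ℕ))) : ℝ := (L.map fun p => |p.1|).sum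

lemma sumT_deriv (m : ℝ) (k : ℕ) (L : List (ℝ × (Fin n → ℕ))) {y : E n} (hy : y ≠ 0) :
    ∃ D : E n →L[ℝ] ℝ, HasFDerivAt (sumT m k L) D y ∧
      ∀ j, D (EuclideanSpace.single j 1) = sumT m (k + 1) (L.flatMap (step m k j)) y := by
  induction L with
  | nil =>
    refine ⟨0, ?_, ?_⟩
    · exact hasFDerivAt_const (0 : ℝ) y
    · intro j; simp [sumT]
  | cons p L ih =>
    obtain ⟨D1, hD1, hD1e⟩ := term_deriv m k p hy
    obtain ⟨D2, hD2, hD2e⟩ := ih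
    refine ⟨D1 + D2, ?_, ?_⟩
    · exact hD1.add hD2
    · intro j
      rw [ContinuousLinearMap.add_apply, hD1e j, hD2e j]
      simp only [sumT, List.flatMap_cons, List.map_append, List.sum_append]

lemma wt_bind_le (m : ℝ) (k : ℕ) (j : Fin n) (L : List (ℝ × (Fin n → ℕ)))
    (hdeg : ∀ p ∈ L, deg p.2 ≤ k) :
    wt (L.flatMap (step m k j)) ≤ ((|m| + 4) * (k + 1)) * wt L := by
  induction L with
  | nil => simp [wt]
  | cons p L ih =>
    have h1 : deg p.2 ≤ k := hdeg p (by simp)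
    have h2 := ih fun q hq => hdeg q (by simp [hq])
    have hαj : (p.2 j : ℝ) ≤ (k : ℝ) := by
      exact_mod_cast le_trans (Finset.single_le_sum (f := p.2)
        (fun i _ => Nat.zero_le _) (Finset.mem_univ j)) h1
    have hd : (deg p.2 : ℝ) ≤ (k : ℝ) := by exact_mod_cast h1
    have hm1 : |m - (k : ℝ) - (deg p.2 : ℝ)| ≤ |m| + 2 * k := by
      have := le_abs_self m
      have := neg_abs_le m
      have : (0:ℝ) ≤ (deg p.2 : ℝ) := Nat.cast_nonneg _
      rw [abs_le]
      have hma := le_abs_self m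
      have hmb := neg_abs_le m
      have hdn : (0:ℝ) ≤ (deg p.2 : ℝ) := Nat.cast_nonneg _
      have hkn : (0:ℝ) ≤ (k : ℝ) := Nat.cast_nonneg _
      constructor <;> linarith
    simp only [List.flatMap_cons, wt, List.map_append, List.sum_append, List.map_cons,
      List.sum_cons, List.map_nil, List.sum_nil, step, add_zero] at h2 ⊢
    have hc : (0:ℝ) ≤ |p.1| := abs_nonneg _
    have e1 : |p.1 * (p.2 j : ℝ)| = |p.1| * (p.2 j : ℝ) := by
      rw [abs_mul, Nat.abs_cast]
    have e2 : |p.1 * (m - k - deg p.2)| ≤ |p.1| * (|m| + 2 * k) := by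
      rw [abs_mul]; exact mul_le_mul_of_nonneg_left hm1 hc
    have hkn : (0:ℝ) ≤ (k:ℝ) := Nat.cast_nonneg k
    nlinarith [mul_le_mul_of_nonneg_left hαj hc, abs_nonneg p.1,
      mul_nonneg hc (mul_nonneg (abs_nonneg m) hkn), mul_nonneg hc hkn]

def Rep (m : ℝ) (k : ℕ) (g : E n → ℝ) : Prop :=
  ∃ L : List (ℝ × (Fin n → ℕ)), (∀ y : E n, y ≠ 0 → g y = sumT m k L y) ∧
    (∀ p ∈ L, deg p.2 ≤ k) ∧ wt L ≤ (|m| + 4) ^ k * (Nat.factorial k : ℝ)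

lemma rep_pd (m : ℝ) (k : ℕ) (j : Fin n) {g : E n → ℝ} (h : Rep m k g) :
    Rep m (k + 1) (pd j g) := by
  obtain ⟨L, hL, hdeg, hwt⟩ := h
  refine ⟨L.flatMap (step m k j), ?_, ?_, ?_⟩
  · intro y hy
    obtain ⟨D, hD, hDe⟩ := sumT_deriv m k L hy
    have heq : g =ᶠ[nhds y] sumT m k L :=
      Filter.eventuallyEq_of_mem (isOpen_compl_singleton.mem_nhds hy) fun z hz => hL z hz
    rw [pd, heq.fderiv_eq, hD.fderiv, hDe j]
  · intro q hq
    rw [List.mem_flatMap] at hq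
    obtain ⟨p, hp, hq⟩ := hq
    have hpk := hdeg p hp
    simp only [step, List.mem_cons, List.mem_singleton, List.not_mem_nil, or_false] at hq
    rcases hq with hq | hq <;> subst hq
    · refine le_trans ?_ (Nat.le_succ_of_le hpk)
      refine Finset.sum_le_sum fun i _ => ?_
      show Function.update p.2 j (p.2 j - 1) i ≤ p.2 i
      rcases eq_or_ne i j with rfl | hij
      · rw [Function.update_self]; omega
      · rw [Function.update_of_ne hij]
    · show deg (Function.update p.2 j (p.2 j + 1)) ≤ k + 1
      rw [deg_update_add]
      omega
  · have h4 : (0:ℝ) < |m| + 4 := by positivity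
    calc wt (L.flatMap (step m k j)) ≤ ((|m| + 4) * (k + 1)) * wt L := wt_bind_le m k j L hdeg
      _ ≤ ((|m| + 4) * (k + 1)) * ((|m| + 4) ^ k * (Nat.factorial k : ℝ)) := by
          apply mul_le_mul_of_nonneg_left hwt
          positivity
      _ = (|m| + 4) ^ (k + 1) * (Nat.factorial (k + 1) : ℝ) := by
          rw [pow_succ, Nat.factorial_succ]
          push_cast
          ring

lemma rep_iterate (m : ℝ) (k : ℕ) (j : Fin n) (s : ℕ) {g : E n → ℝ} (h : Rep m k g) :
    Rep m (k + s) ((pd j)^[s] g) := by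
  induction s with
  | zero => exact h
  | succ s ih =>
    rw [Function.iterate_succ_apply']
    exact rep_pd m (k + s) j ih

lemma rep_foldr (m : ℝ) (γ : Fin n → ℕ) (l : List (Fin n)) {g : E n → ℝ} (h : Rep m 0 g) :
    Rep m ((l.map γ).sum) (l.foldr (fun i g => (pd i)^[γ i] g) g) := by
  induction l with
  | nil => simpa using h
  | cons i l ih =>
    have h2 := rep_iterate m ((l.map γ).sum) i (γ i) ih
    have : (List.map γ (i :: l)).sum = (l.map γ).sum + γ i := by simp [Nat.add_comm]
    rw [this]
    exact h2

lemma rep_base (m : ℝ) : Rep m 0 (fun z : E n => ‖z‖ ^ m) := by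
  refine ⟨[(1, fun _ => 0)], ?_, ?_, ?_⟩
  · intro y hy
    simp [sumT, term, deg]
  · intro p hp
    simp only [List.mem_singleton] at hp
    subst hp
    simp [deg]
  · simp [wt]

lemma term_bound (m : ℝ) (k : ℕ) (p : ℝ × (Fin n → ℕ)) {y : E n} (hy : y ≠ 0) :
    |term m k p y| ≤ |p.1| * ‖y‖ ^ (m - k : ℝ) := by
  have h0 : 0 < ‖y‖ := norm_pos_iff.mpr hy
  have h1 : |∏ i, y i ^ p.2 i| ≤ ‖y‖ ^ (deg p.2 : ℕ) := by
    rw [Finset.abs_prod]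
    calc (∏ i, |y i ^ p.2 i|) = ∏ i, |y i| ^ p.2 i := by simp [abs_pow]
      _ ≤ ∏ i, ‖y‖ ^ p.2 i := Finset.prod_le_prod (fun _ _ => pow_nonneg (abs_nonneg _) _)
          (fun i _ => pow_le_pow_left₀ (abs_nonneg _) (abs_coord_le_norm y i) _)
      _ = ‖y‖ ^ (deg p.2 : ℕ) := by rw [Finset.prod_pow_eq_pow_sum]; rfl
  have h2 : |term m k p y| = |p.1| * |∏ i, y i ^ p.2 i| * ‖y‖ ^ (m - k - deg p.2 : ℝ) := by
    rw [term, abs_mul, abs_mul, abs_of_nonneg (Real.rpow_nonneg h0.le _)]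
  rw [h2]
  calc |p.1| * |∏ i, y i ^ p.2 i| * ‖y‖ ^ (m - k - deg p.2 : ℝ)
      ≤ |p.1| * ‖y‖ ^ (deg p.2 : ℕ) * ‖y‖ ^ (m - k - deg p.2 : ℝ) := by
        apply mul_le_mul_of_nonneg_right (mul_le_mul_of_nonneg_left h1 (abs_nonneg _))
        exact Real.rpow_nonneg h0.le _
    _ = |p.1| * ‖y‖ ^ (m - k : ℝ) := by
        rw [mul_assoc, ← Real.rpow_natCast ‖y‖ (deg p.2), ← Real.rpow_add h0]
        ring_nf

lemma sumT_bound (m : ℝ) (k : ℕ) (L : List (ℝ × (Fin n → ℕ))) {y : E n} (hy : y ≠ 0) :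
    |sumT m k L y| ≤ wt L * ‖y‖ ^ (m - k : ℝ) := by
  induction L with
  | nil => simp [sumT, wt]
  | cons p L ih =>
    have h1 := term_bound m k p hy
    calc |sumT m k (p :: L) y| = |term m k p y + sumT m k L y| := rfl
      _ ≤ |term m k p y| + |sumT m k L y| := abs_add_le _ _
      _ ≤ |p.1| * ‖y‖ ^ (m - k : ℝ) + wt L * ‖y‖ ^ (m - k : ℝ) := add_le_add h1 ih
      _ = wt (p :: L) * ‖y‖ ^ (m - k : ℝ) := by
          show _ = (List.map (fun p => |p.1|) (p :: L)).sum * _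
          rw [List.map_cons, List.sum_cons]
          unfold wt
          ring

end Stmt2Aux


theorem stmt2 (n : ℕ) (hn : 1 ≤ n) (m : ℝ) :
    ∃ A₀ : ℝ, 0 < A₀ ∧ ∀ (γ : Fin n → ℕ) (y : E n), y ≠ 0 →
      |mderiv γ (fun z => ‖z‖ ^ m) y| ≤
        A₀ ^ (∑ i, γ i + 1) * (Nat.factorial (∑ i, γ i) : ℝ) *
          ‖y‖ ^ (m - (∑ i, γ i : ℝ)) := by
  refine ⟨|m| + 4, by positivity, ?_⟩
  intro γ y hy
  have hrep := Stmt2Aux.rep_foldr m γ (List.finRange n) (Stmt2Aux.rep_base (n := n) m)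
  rw [show ((List.finRange n).map γ).sum = ∑ i, γ i from (Fin.sum_univ_def γ).symm] at hrep
  obtain ⟨L, hL, hdeg, hwt⟩ := hrep
  have heq : mderiv γ (fun z => ‖z‖ ^ m) y = Stmt2Aux.sumT m (∑ i, γ i) L y := hL y hy
  rw [heq]
  have hb := Stmt2Aux.sumT_bound m (∑ i, γ i) L hy
  have hnorm : (0:ℝ) ≤ ‖y‖ ^ (m - (∑ i, γ i : ℕ) : ℝ) := Real.rpow_nonneg (norm_nonneg y) _
  have hfa : (0:ℝ) ≤ (Nat.factorial (∑ i, γ i) : ℝ) := Nat.cast_nonneg _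
  have hA1 : (1:ℝ) ≤ |m| + 4 := by linarith [abs_nonneg m]
  have h2 : ((|m| + 4) ^ (∑ i, γ i) : ℝ) * (Nat.factorial (∑ i, γ i) : ℝ)
      ≤ (|m| + 4) ^ (∑ i, γ i + 1) * (Nat.factorial (∑ i, γ i) : ℝ) := by
    apply mul_le_mul_of_nonneg_right _ hfa
    exact pow_le_pow_right₀ hA1 (Nat.le_succ _)
  calc |Stmt2Aux.sumT m (∑ i, γ i) L y|
      ≤ Stmt2Aux.wt L * ‖y‖ ^ (m - (∑ i, γ i : ℕ) : ℝ) := hb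
    _ ≤ ((|m| + 4) ^ (∑ i, γ i) * (Nat.factorial (∑ i, γ i) : ℝ))
          * ‖y‖ ^ (m - (∑ i, γ i : ℕ) : ℝ) := mul_le_mul_of_nonneg_right hwt hnorm
    _ ≤ ((|m| + 4) ^ (∑ i, γ i + 1) * (Nat.factorial (∑ i, γ i) : ℝ))
          * ‖y‖ ^ (m - (∑ i, γ i : ℕ) : ℝ) := mul_le_mul_of_nonneg_right h2 hnorm
    _ = (|m| + 4) ^ (∑ i, γ i + 1) * (Nat.factorial (∑ i, γ i) : ℝ)
          * ‖y‖ ^ (m - (∑ i, γ i : ℝ)) := by norm_num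
end
end

section
/- Let ω = ξ/|ξ| for ξ ∈ ℝⁿ \ {0}. There exists a constant A₀ > 0 such that for all multi-indices α and all ξ ≠ 0 and 1 ≤ j ≤ n: |∂_ξ^α ω_j| ≤ 2 A₀^{|α|+1} |α|! |ξ|^{-|α|}. -/
open Real
open scoped BigOperators

noncomputable section

namespace Stmt4Aux

variable {n : ℕ}

/-- monomial -/
def mono (μ : Fin n → ℕ) (ζ : E n) : ℝ := ∏ i, ζ i ^ μ i

/-- derivative of the monomial at ζ -/
def monoD (μ : Fin n → ℕ) (ζ : E n) : E n →L[ℝ] ℝ :=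
  ∑ l, (∏ j ∈ Finset.univ.erase l, ζ j ^ μ j) •
    (((μ l : ℝ) * ζ l ^ (μ l - 1)) • (EuclideanSpace.proj l : E n →L[ℝ] ℝ))

lemma hasFDerivAt_mono (μ : Fin n → ℕ) (ζ : E n) :
    HasFDerivAt (mono μ) (monoD μ ζ) ζ := by
  have h : ∀ l ∈ (Finset.univ : Finset (Fin n)), HasFDerivAt (fun x : E n => x l ^ μ l)
      (((μ l : ℝ) * ζ l ^ (μ l - 1)) • (EuclideanSpace.proj l : E n →L[ℝ] ℝ)) ζ := by
    intro l _
    exact (hasDerivAt_pow (μ l) (ζ l)).comp_hasFDerivAt ζ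
      (EuclideanSpace.proj l : E n →L[ℝ] ℝ).hasFDerivAt
  exact HasFDerivAt.finset_prod h

lemma monoD_apply (μ : Fin n → ℕ) (ζ : E n) (i : Fin n) :
    monoD μ ζ (EuclideanSpace.single i 1) =
      (∏ j ∈ Finset.univ.erase i, ζ j ^ μ j) * ((μ i : ℝ) * ζ i ^ (μ i - 1)) := by
  simp only [monoD, ContinuousLinearMap.sum_apply, ContinuousLinearMap.smul_apply,
    PiLp.proj_apply, EuclideanSpace.single_apply, smul_eq_mul]
  rw [Finset.sum_eq_single i]
  · simp
  · intro l _ hl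
    simp [hl]
  · simp

/-- value of a list of monomials -/
def pval (L : List (ℝ × (Fin n → ℕ))) (ζ : E n) : ℝ :=
  (L.map fun p => p.1 * mono p.2 ζ).sum

def pvalD (L : List (ℝ × (Fin n → ℕ))) (ζ : E n) : E n →L[ℝ] ℝ :=
  (L.map fun p => p.1 • monoD p.2 ζ).sum

lemma hasFDerivAt_pval (L : List (ℝ × (Fin n → ℕ))) (ζ : E n) :
    HasFDerivAt (fun x => pval L x) (pvalD L ζ) ζ := by
  induction L with
  | nil => simpa [pval, pvalD] using hasFDerivAt_const (0 : ℝ) ζ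
  | cons p L ih =>
      have h := ((hasFDerivAt_mono p.2 ζ).const_mul p.1).add ih
      simp only [pval, pvalD, List.map_cons, List.sum_cons]; exact h

lemma pvalD_apply (L : List (ℝ × (Fin n → ℕ))) (ζ : E n) (v : E n) :
    pvalD L ζ v = (L.map fun p => p.1 * monoD p.2 ζ v).sum := by
  induction L with
  | nil => simp [pvalD]
  | cons p L ih => simp [pvalD, ContinuousLinearMap.add_apply, ← ih]

lemma pval_append (L₁ L₂ : List (ℝ × (Fin n → ℕ))) (ζ : E n) :
    pval (L₁ ++ L₂) ζ = pval L₁ ζ + pval L₂ ζ := by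
  simp [pval]

lemma norm_sq_eq (ζ : E n) : ‖ζ‖ ^ 2 = ∑ l, ζ l ^ 2 := by
  rw [EuclideanSpace.norm_eq, Real.sq_sqrt (by positivity)]
  simp [sq_abs]

lemma mono_add_single (σ : Fin n → ℕ) (l : Fin n) (e : ℕ) (ζ : E n) :
    mono (fun m => σ m + if m = l then e else 0) ζ = mono σ ζ * ζ l ^ e := by
  unfold mono
  simp only [pow_add]
  rw [Finset.prod_mul_distrib]
  congr 1
  rw [Finset.prod_eq_single l]
  · simp
  · intro m _ hm; simp [hm]
  · simp

lemma hasFDerivAt_norm' {ζ : E n} (hζ : ζ ≠ 0) :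
    HasFDerivAt (fun x : E n => ‖x‖) (‖ζ‖⁻¹ • (innerSL ℝ ζ : E n →L[ℝ] ℝ)) ζ := by
  have h0 : ‖ζ‖ ≠ 0 := norm_ne_zero_iff.mpr hζ
  have h1 : HasFDerivAt (fun x : E n => ‖x‖ ^ 2) ((2 : ℕ) • (innerSL ℝ ζ : E n →L[ℝ] ℝ)) ζ :=
    (hasStrictFDerivAt_norm_sq ζ).hasFDerivAt
  have h2 := h1.sqrt (by positivity)
  have h3 : (fun x : E n => √(‖x‖ ^ 2)) = fun x : E n => ‖x‖ := by
    funext x; exact Real.sqrt_sq (norm_nonneg x)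
  rw [h3] at h2
  refine h2.congr_fderiv ?_
  rw [Real.sqrt_sq (norm_nonneg ζ)]
  ext v
  simp only [ContinuousLinearMap.smul_apply, smul_eq_mul, ContinuousLinearMap.coe_smul',
    Pi.smul_apply, nsmul_eq_mul, Nat.cast_ofNat]
  field_simp

/-- The key derivative formula. -/
lemma pd_formula (i : Fin n) (k : ℕ) (L : List (ℝ × (Fin n → ℕ))) {ζ : E n} (hζ : ζ ≠ 0) :
    pd i (fun x => pval L x / ‖x‖ ^ (2 * k + 1)) ζ
      = (pvalD L ζ (EuclideanSpace.single i 1) * ‖ζ‖ ^ 2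
          - (2 * (k : ℝ) + 1) * ζ i * pval L ζ) / ‖ζ‖ ^ (2 * (k + 1) + 1) := by
  have h0 : ‖ζ‖ ≠ 0 := norm_ne_zero_iff.mpr hζ
  have hpos : (0:ℝ) < ‖ζ‖ := norm_pos_iff.mpr hζ
  have hpow : HasDerivAt (fun t : ℝ => (t ^ (2 * k + 1))⁻¹)
      (-(((2 * k + 1 : ℕ) : ℝ) * ‖ζ‖ ^ (2 * k + 1 - 1)) / (‖ζ‖ ^ (2 * k + 1)) ^ 2) ‖ζ‖ :=
    (hasDerivAt_pow (2 * k + 1) ‖ζ‖).inv (pow_ne_zero _ h0)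
  have hinv := hpow.comp_hasFDerivAt ζ (hasFDerivAt_norm' hζ)
  have hF := (hasFDerivAt_pval L ζ).mul hinv
  have hfun : (fun x : E n => pval L x / ‖x‖ ^ (2 * k + 1))
      = fun x : E n => pval L x * ((fun t : ℝ => (t ^ (2 * k + 1))⁻¹) ∘ fun x : E n => ‖x‖) x := by
    funext x; simp [Function.comp, div_eq_mul_inv]
  rw [pd, hfun, (show HasFDerivAt (fun x : E n => pval L x * ((fun t : ℝ => (t ^ (2 * k + 1))⁻¹) ∘ fun x : E n => ‖x‖) x) _ ζ from hF).fderiv]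
  have hinner : (innerSL ℝ ζ : E n →L[ℝ] ℝ) (EuclideanSpace.single i 1) = ζ i := by
    rw [innerSL_apply_apply, EuclideanSpace.inner_single_right]
    simp
  simp only [ContinuousLinearMap.add_apply, ContinuousLinearMap.smul_apply, smul_eq_mul,
    Function.comp, hinner]
  rw [Nat.add_sub_cancel]; push_cast
  field_simp
  ring

/-- the new list after one differentiation -/
def dstep (i : Fin n) (k : ℕ) (L : List (ℝ × (Fin n → ℕ))) : List (ℝ × (Fin n → ℕ)) :=
  (L.flatMap fun p => (List.finRange n).map fun l =>
      (p.1 * (p.2 i : ℝ), fun m => (Function.update p.2 i (p.2 i - 1)) m + if m = l then 2 else 0))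
    ++ L.map fun p => (-(2 * (k : ℝ) + 1) * p.1, fun m => p.2 m + if m = i then 1 else 0)

lemma mono_update (μ : Fin n → ℕ) (i : Fin n) (ζ : E n) :
    (μ i : ℝ) * mono (Function.update μ i (μ i - 1)) ζ
      = (∏ j ∈ Finset.univ.erase i, ζ j ^ μ j) * ((μ i : ℝ) * ζ i ^ (μ i - 1)) := by
  unfold mono
  rw [← Finset.mul_prod_erase (Finset.univ) _ (Finset.mem_univ i)]
  rw [Function.update_self]
  have : ∏ j ∈ Finset.univ.erase i, ζ j ^ (Function.update μ i (μ i - 1)) j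
      = ∏ j ∈ Finset.univ.erase i, ζ j ^ μ j := by
    refine Finset.prod_congr rfl fun j hj => ?_
    rw [Function.update_of_ne (Finset.ne_of_mem_erase hj)]
  rw [this]; ring

lemma pval_finRange_map (c : ℝ) (σ : Fin n → ℕ) (ζ : E n) :
    pval ((List.finRange n).map fun l => (c, fun m => σ m + if m = l then 2 else 0)) ζ
      = c * mono σ ζ * ‖ζ‖ ^ 2 := by
  unfold pval
  rw [List.map_map]
  have : ((fun p : ℝ × (Fin n → ℕ) => p.1 * mono p.2 ζ) ∘
      fun l => ((c, fun m => σ m + if m = l then 2 else 0) : ℝ × (Fin n → ℕ)))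
      = fun l => c * (mono σ ζ * ζ l ^ 2) := by
    funext l; simp [Function.comp, mono_add_single]
  rw [this, norm_sq_eq, Fin.sum_univ_def]
  rw [← List.sum_map_mul_left]
  congr 1
  exact List.map_congr_left fun l _ => by ring

lemma pval_bind (i : Fin n) (L : List (ℝ × (Fin n → ℕ))) (ζ : E n) :
    pval (L.flatMap fun p => (List.finRange n).map fun l =>
        ((p.1 * p.2 i : ℝ), fun m => (Function.update p.2 i (p.2 i - 1)) m + if m = l then 2 else 0)) ζ
      = pvalD L ζ (EuclideanSpace.single i 1) * ‖ζ‖ ^ 2 := by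
  induction L with
  | nil => simp [pval, pvalD]
  | cons p L ih =>
      rw [show ((p :: L).flatMap fun p => List.map (fun l => ((p.1 * (p.2 i : ℕ) : ℝ), fun m => Function.update p.2 i (p.2 i - 1) m + if m = l then 2 else 0)) (List.finRange n)) = (List.map (fun l => ((p.1 * (p.2 i : ℕ) : ℝ), fun m => Function.update p.2 i (p.2 i - 1) m + if m = l then 2 else 0)) (List.finRange n)) ++ (L.flatMap fun p => List.map (fun l => ((p.1 * (p.2 i : ℕ) : ℝ), fun m => Function.update p.2 i (p.2 i - 1) m + if m = l then 2 else 0)) (List.finRange n)) from List.flatMap_cons .., pval_append, ih, pval_finRange_map]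
      simp only [pvalD_apply, List.map_cons, List.sum_cons, monoD_apply]
      rw [← mono_update]
      ring

lemma pval_maplast (i : Fin n) (k : ℕ) (L : List (ℝ × (Fin n → ℕ))) (ζ : E n) :
    pval (L.map fun p =>
        ((-(2 * (k : ℝ) + 1) * p.1 : ℝ), fun m => p.2 m + if m = i then 1 else 0)) ζ
      = -(2 * (k : ℝ) + 1) * ζ i * pval L ζ := by
  induction L with
  | nil => simp [pval]
  | cons p L ih =>
      unfold pval at *
      simp only [List.map_cons, List.sum_cons, ih, mono_add_single, pow_one]
      ring

lemma pval_dstep (i : Fin n) (k : ℕ) (L : List (ℝ × (Fin n → ℕ))) (ζ : E n) :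
    pval (dstep i k L) ζ = pvalD L ζ (EuclideanSpace.single i 1) * ‖ζ‖ ^ 2
      - (2 * (k : ℝ) + 1) * ζ i * pval L ζ := by
  rw [dstep, pval_append, pval_bind, pval_maplast]
  ring

lemma abs_coord_le (ζ : E n) (i : Fin n) : |ζ i| ≤ ‖ζ‖ := by
  have h := abs_real_inner_le_norm ζ (EuclideanSpace.single i (1:ℝ))
  rw [EuclideanSpace.inner_single_right, EuclideanSpace.norm_single] at h
  simpa using h

lemma abs_mono_le (μ : Fin n → ℕ) (ζ : E n) : |mono μ ζ| ≤ ‖ζ‖ ^ (∑ m, μ m) := by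
  unfold mono
  rw [Finset.abs_prod]
  calc (∏ i, |ζ i ^ μ i|) ≤ ∏ i, ‖ζ‖ ^ μ i := by
        refine Finset.prod_le_prod (fun i _ => abs_nonneg _) (fun i _ => ?_)
        rw [abs_pow]
        exact pow_le_pow_left₀ (abs_nonneg _) (abs_coord_le ζ i) _
    _ = ‖ζ‖ ^ ∑ m, μ m := by rw [Finset.prod_pow_eq_pow_sum]

lemma abs_pval_le (k : ℕ) (L : List (ℝ × (Fin n → ℕ)))
    (hdeg : ∀ p ∈ L, p.1 = 0 ∨ ∑ m, p.2 m = k + 1) (ζ : E n) :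
    |pval L ζ| ≤ (L.map fun p => |p.1|).sum * ‖ζ‖ ^ (k + 1) := by
  induction L with
  | nil => simp [pval]
  | cons p L ih =>
      have h2 : |p.1 * mono p.2 ζ| ≤ |p.1| * ‖ζ‖ ^ (k + 1) := by
        rcases hdeg p List.mem_cons_self with h | h
        · simp only [h, zero_mul, abs_zero]; exact le_refl 0
        
        · rw [abs_mul]
          have := abs_mono_le p.2 ζ
          rw [h] at this
          exact mul_le_mul_of_nonneg_left this (abs_nonneg _)
      have ih' := ih fun q hq => hdeg q (List.mem_cons_of_mem p hq)
      unfold pval at *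
      simp only [List.map_cons, List.sum_cons]
      calc |p.1 * mono p.2 ζ + (List.map (fun p => p.1 * mono p.2 ζ) L).sum|
          ≤ |p.1 * mono p.2 ζ| + |(List.map (fun p => p.1 * mono p.2 ζ) L).sum| := abs_add_le _ _
        _ ≤ |p.1| * ‖ζ‖ ^ (k + 1) + (List.map (fun p => |p.1|) L).sum * ‖ζ‖ ^ (k + 1) := by
            exact add_le_add h2 ih'
        _ = (|p.1| + (List.map (fun p => |p.1|) L).sum) * ‖ζ‖ ^ (k + 1) := by ring

lemma bind_cons' {α β : Type*} (p : α) (L : List α) (F : α → List β) :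
    (p :: L).flatMap F = F p ++ L.flatMap F := List.flatMap_cons ..

/-- representation predicate -/
def Rep (k : ℕ) (B : ℝ) (f : E n → ℝ) : Prop :=
  ∃ L : List (ℝ × (Fin n → ℕ)),
    (∀ p ∈ L, p.1 = 0 ∨ ∑ m, p.2 m = k + 1) ∧
    (L.map fun p => |p.1|).sum ≤ B ∧
    ∀ ζ : E n, ζ ≠ 0 → f ζ = pval L ζ / ‖ζ‖ ^ (2 * k + 1)

lemma dstep_deg (i : Fin n) (k : ℕ) (L : List (ℝ × (Fin n → ℕ)))
    (hdeg : ∀ p ∈ L, p.1 = 0 ∨ ∑ m, p.2 m = k + 1) :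
    ∀ p ∈ dstep i k L, p.1 = 0 ∨ ∑ m, p.2 m = (k + 1) + 1 := by
  intro p hp
  rw [dstep, List.mem_append] at hp
  rcases hp with hp | hp
  · rw [List.mem_flatMap] at hp
    obtain ⟨q, hq, hp⟩ := hp
    rw [List.mem_map] at hp
    obtain ⟨l, _, rfl⟩ := hp
    by_cases hz : q.1 * (q.2 i : ℝ) = 0
    · exact Or.inl hz
    · right
      have hq1 : q.1 ≠ 0 := fun h => hz (by simp [h])
      have hqi : q.2 i ≠ 0 := fun h => hz (by simp [h])
      have hdq := (hdeg q hq).resolve_left hq1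
      have hsum : ∑ m, q.2 m = q.2 i + ∑ m ∈ Finset.univ.erase i, q.2 m :=
        (Finset.add_sum_erase _ _ (Finset.mem_univ i)).symm
      have hupd : ∑ m, (Function.update q.2 i (q.2 i - 1)) m
          = (q.2 i - 1) + ∑ m ∈ Finset.univ.erase i, q.2 m := by
        rw [← Finset.add_sum_erase _ _ (Finset.mem_univ i), Function.update_self]
        congr 1
        exact Finset.sum_congr rfl fun m hm => by
          rw [Function.update_of_ne (Finset.ne_of_mem_erase hm)]
      have hite : ∑ m, (if m = l then 2 else 0) = 2 := by simp
      simp only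
      rw [Finset.sum_add_distrib, hupd, hite]
      omega
  · rw [List.mem_map] at hp
    obtain ⟨q, hq, rfl⟩ := hp
    by_cases hz : q.1 = 0
    · exact Or.inl (by simp [hz])
    · right
      have hdq := (hdeg q hq).resolve_left hz
      have hite : ∑ m, (if m = i then 1 else 0) = 1 := by simp
      simp only
      rw [Finset.sum_add_distrib, hdq, hite]

lemma bindpart_le (i : Fin n) (k : ℕ) (L : List (ℝ × (Fin n → ℕ)))
    (hdeg : ∀ p ∈ L, p.1 = 0 ∨ ∑ m, p.2 m = k + 1) :
    ((L.flatMap fun p => (List.finRange n).map fun l =>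
        ((p.1 * p.2 i : ℝ), fun m => (Function.update p.2 i (p.2 i - 1)) m + if m = l then 2 else 0)).map
          fun p => |p.1|).sum
      ≤ ((n : ℝ) * ((k : ℝ) + 1)) * (L.map fun p => |p.1|).sum := by
  induction L with
  | nil => simp
  | cons q L ih =>
      have ih' := ih fun p hp => hdeg p (List.mem_cons_of_mem q hp)
      rw [bind_cons', List.map_append, List.sum_append, List.map_cons, List.sum_cons,
        List.map_map]
      have hconst : ((List.finRange n).map
          ((fun p : ℝ × (Fin n → ℕ) => |p.1|) ∘ fun l =>
            ((q.1 * q.2 i : ℝ), fun m => (Function.update q.2 i (q.2 i - 1)) m + if m = l then 2 else 0))).sum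
          = (n : ℝ) * |q.1 * (q.2 i : ℝ)| := by
        have : ((fun p : ℝ × (Fin n → ℕ) => |p.1|) ∘ fun l : Fin n =>
            ((q.1 * q.2 i : ℝ), fun m => (Function.update q.2 i (q.2 i - 1)) m + if m = l then 2 else 0))
            = fun _ : Fin n => |q.1 * (q.2 i : ℝ)| := by
          funext l; rfl
        rw [this, List.map_const', List.sum_replicate, List.length_finRange, nsmul_eq_mul]
      rw [hconst]
      have hq : (n : ℝ) * |q.1 * (q.2 i : ℝ)| ≤ ((n : ℝ) * ((k : ℝ) + 1)) * |q.1| := by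
        rcases hdeg q List.mem_cons_self with h | h
        · simp [h]
        · have h1 : (q.2 i : ℝ) ≤ (k : ℝ) + 1 := by
            have : q.2 i ≤ k + 1 := h ▸ Finset.single_le_sum (f := q.2) (fun _ _ => Nat.zero_le _)
              (Finset.mem_univ i)
            exact_mod_cast this
          rw [abs_mul, Nat.abs_cast]
          calc (n : ℝ) * (|q.1| * (q.2 i : ℝ)) ≤ (n : ℝ) * (|q.1| * ((k : ℝ) + 1)) := by
                refine mul_le_mul_of_nonneg_left (mul_le_mul_of_nonneg_left h1 (abs_nonneg _))
                  (Nat.cast_nonneg n)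
            _ = ((n : ℝ) * ((k : ℝ) + 1)) * |q.1| := by ring
      calc (n : ℝ) * |q.1 * (q.2 i : ℝ)| + _ ≤ ((n : ℝ) * ((k : ℝ) + 1)) * |q.1|
            + ((n : ℝ) * ((k : ℝ) + 1)) * (L.map fun p => |p.1|).sum := add_le_add hq ih'
        _ = ((n : ℝ) * ((k : ℝ) + 1)) * (|q.1| + (L.map fun p => |p.1|).sum) := by ring
        _ = _ := by simp

lemma dstep_coeff (i : Fin n) (k : ℕ) (L : List (ℝ × (Fin n → ℕ)))
    (hdeg : ∀ p ∈ L, p.1 = 0 ∨ ∑ m, p.2 m = k + 1) :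
    ((dstep i k L).map fun p => |p.1|).sum
      ≤ (((n : ℝ) + 2) * ((k : ℝ) + 2)) * (L.map fun p => |p.1|).sum := by
  have hS : (0:ℝ) ≤ (L.map fun p => |p.1|).sum :=
    List.sum_nonneg fun x hx => by
      obtain ⟨p, _, rfl⟩ := List.mem_map.mp hx; exact abs_nonneg _
  rw [dstep, List.map_append, List.sum_append]
  have h1 := bindpart_le i k L hdeg
  have h2 : ((L.map fun p : ℝ × (Fin n → ℕ) =>
      ((-(2 * (k : ℝ) + 1) * p.1 : ℝ), fun m => p.2 m + if m = i then 1 else 0)).map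
        fun p => |p.1|).sum = (2 * (k : ℝ) + 1) * (L.map fun p => |p.1|).sum := by
    rw [List.map_map, ← List.sum_map_mul_left]
    congr 1
    refine List.map_congr_left fun p _ => ?_
    simp only [Function.comp]
    rw [abs_mul, abs_neg, abs_of_nonneg (by positivity : (0:ℝ) ≤ 2 * (k : ℝ) + 1)]
  rw [h2]
  have hk : (0:ℝ) ≤ (k : ℝ) := Nat.cast_nonneg k
  have hn : (0:ℝ) ≤ (n : ℝ) := Nat.cast_nonneg n
  nlinarith [h1, hS]

lemma rep_step (i : Fin n) (k : ℕ) {B : ℝ} {f : E n → ℝ} (h : Rep k B f) (hB : 0 ≤ B) :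
    Rep (k + 1) ((((n : ℝ) + 2) * ((k : ℝ) + 2)) * B) (pd i f) := by
  obtain ⟨L, hdeg, hBL, hval⟩ := h
  refine ⟨dstep i k L, dstep_deg i k L hdeg, ?_, ?_⟩
  · calc ((dstep i k L).map fun p => |p.1|).sum
        ≤ (((n : ℝ) + 2) * ((k : ℝ) + 2)) * (L.map fun p => |p.1|).sum :=
          dstep_coeff i k L hdeg
      _ ≤ (((n : ℝ) + 2) * ((k : ℝ) + 2)) * B := by
          refine mul_le_mul_of_nonneg_left hBL (by positivity)
  · intro ζ hζ
    have hev : f =ᶠ[nhds ζ] fun x => pval L x / ‖x‖ ^ (2 * k + 1) := by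
      filter_upwards [IsOpen.mem_nhds isOpen_compl_singleton hζ] with x hx
      exact hval x hx
    have hpd : pd i f ζ = pd i (fun x => pval L x / ‖x‖ ^ (2 * k + 1)) ζ := by
      unfold pd
      rw [Filter.EventuallyEq.fderiv_eq hev]
    rw [hpd, pd_formula i k L hζ, ← pval_dstep]

def Bk (n k : ℕ) : ℝ := (2 * ((n : ℝ) + 2)) ^ k * (Nat.factorial k : ℝ)

lemma Bk_pos (k : ℕ) : 0 < Bk n k := by
  have h1 : (0:ℝ) < (Nat.factorial k : ℝ) := Nat.cast_pos.mpr (Nat.factorial_pos k)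
  have h2 : (0:ℝ) < 2 * ((n : ℝ) + 2) := by positivity
  unfold Bk; positivity

lemma rep_mono {k : ℕ} {B B' : ℝ} {f : E n → ℝ} (h : Rep k B f) (hBB : B ≤ B') :
    Rep k B' f := by
  obtain ⟨L, h1, h2, h3⟩ := h
  exact ⟨L, h1, le_trans h2 hBB, h3⟩

lemma rep_step_Bk (i : Fin n) {k : ℕ} {f : E n → ℝ} (h : Rep k (Bk n k) f) :
    Rep (k + 1) (Bk n (k + 1)) (pd i f) := by
  refine rep_mono (rep_step i k h (le_of_lt (Bk_pos k))) ?_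
  have heq : Bk n (k + 1) = (2 * ((n : ℝ) + 2)) * ((k : ℝ) + 1) * Bk n k := by
    unfold Bk
    rw [pow_succ, Nat.factorial_succ]
    push_cast
    ring
  rw [heq]
  have hk : (0:ℝ) ≤ (k : ℝ) := Nat.cast_nonneg k
  have hn : (0:ℝ) ≤ (n : ℝ) := Nat.cast_nonneg n
  nlinarith [mul_nonneg (mul_nonneg (show (0:ℝ) ≤ (n:ℝ) + 2 by linarith) hk)
    (Bk_pos (n := n) k).le]

lemma rep_iter (i : Fin n) (m : ℕ) {k : ℕ} {f : E n → ℝ} (h : Rep k (Bk n k) f) :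
    Rep (k + m) (Bk n (k + m)) ((pd i)^[m] f) := by
  induction m with
  | zero => simpa using h
  | succ m ih =>
      rw [Function.iterate_succ_apply']
      exact rep_step_Bk i ih

lemma rep_foldr (l : List (Fin n)) (α : Fin n → ℕ) {k : ℕ} {f : E n → ℝ}
    (h : Rep k (Bk n k) f) :
    Rep (k + (l.map α).sum) (Bk n (k + (l.map α).sum))
      (l.foldr (fun i g => (pd i)^[α i] g) f) := by
  induction l with
  | nil => simpa using h
  | cons i l ih =>
      rw [List.foldr_cons]
      have := rep_iter i (α i) ih
      have harith : k + (l.map α).sum + α i = k + ((i :: l).map α).sum := by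
        rw [List.map_cons, List.sum_cons]; omega
      rw [harith] at this
      exact this

end Stmt4Aux

open Stmt4Aux in
theorem stmt4' (n : ℕ) (hn : 1 ≤ n) :
    ∃ A₀ : ℝ, 0 < A₀ ∧ ∀ (α : Fin n → ℕ) (ξ : E n), ξ ≠ 0 → ∀ j : Fin n,
      |mderiv α (fun ζ => ζ j / ‖ζ‖) ξ| ≤
        2 * A₀ ^ (∑ i, α i + 1) * (Nat.factorial (∑ i, α i) : ℝ) *
          ‖ξ‖ ^ (-(∑ i, α i : ℝ)) := by
  refine ⟨2 * ((n : ℝ) + 2), by positivity, ?_⟩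
  intro α ξ hξ j
  set K := ∑ i, α i with hK
  have h0 : Rep 0 (Bk n 0) (fun ζ : E n => ζ j / ‖ζ‖) := by
    refine ⟨[(1, fun m => if m = j then 1 else 0)], ?_, ?_, ?_⟩
    · intro p hp
      simp only [List.mem_singleton] at hp
      subst hp
      right
      simp
    · simp [Bk]
    · intro ζ hζ
      have hmono : mono (fun m => if m = j then 1 else 0) ζ = ζ j := by
        unfold mono
        rw [Finset.prod_eq_single j]
        · simp
        · intro m _ hm; simp [hm]
        · simp
      simp [pval, hmono]
  have hrep := rep_foldr (List.finRange n) α h0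
  have hsum : ((List.finRange n).map α).sum = K := (Fin.sum_univ_def α).symm
  rw [hsum] at hrep
  simp only [Nat.zero_add] at hrep
  obtain ⟨L, hdeg, hBL, hval⟩ := hrep
  have hmd : mderiv α (fun ζ : E n => ζ j / ‖ζ‖) ξ = pval L ξ / ‖ξ‖ ^ (2 * K + 1) :=
    hval ξ hξ
  rw [mderiv] at hmd ⊢
  rw [hmd]
  have hnorm : (0:ℝ) < ‖ξ‖ := norm_pos_iff.mpr hξ
  have hbound := abs_pval_le K L hdeg ξ
  have hbound2 : |pval L ξ| ≤ Bk n K * ‖ξ‖ ^ (K + 1) :=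
    le_trans hbound (mul_le_mul_of_nonneg_right hBL (by positivity))
  have hc : -(∑ i, ((α i : ℕ) : ℝ)) = -((K : ℕ) : ℝ) := by
    rw [hK]; push_cast; ring
  have hrpow : ‖ξ‖ ^ (-(K : ℝ)) = (‖ξ‖ ^ K)⁻¹ := by
    rw [Real.rpow_neg (norm_nonneg ξ), Real.rpow_natCast]
  rw [← hK] at *
  rw [hc, hrpow]
  have hstep1 : |pval L ξ / ‖ξ‖ ^ (2 * K + 1)| ≤ Bk n K * (‖ξ‖ ^ K)⁻¹ := by
    rw [abs_div, abs_of_pos (by positivity : (0:ℝ) < ‖ξ‖ ^ (2 * K + 1))]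
    rw [div_le_iff₀ (by positivity)]
    calc |pval L ξ| ≤ Bk n K * ‖ξ‖ ^ (K + 1) := hbound2
      _ = Bk n K * (‖ξ‖ ^ K)⁻¹ * ‖ξ‖ ^ (2 * K + 1) := by
          rw [show 2 * K + 1 = K + (K + 1) by omega, pow_add]
          field_simp
          rw [pow_add, pow_succ]
          ring
  refine le_trans hstep1 ?_
  have hA : (1:ℝ) ≤ 2 * ((n : ℝ) + 2) := by
    have : (0:ℝ) ≤ (n : ℝ) := Nat.cast_nonneg n
    linarith
  have hBkle : Bk n K ≤ 2 * (2 * ((n : ℝ) + 2)) ^ (K + 1) * (Nat.factorial K : ℝ) := by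
    unfold Bk
    have h1 : (2 * ((n : ℝ) + 2)) ^ K ≤ 2 * (2 * ((n : ℝ) + 2)) ^ (K + 1) := by
      calc (2 * ((n : ℝ) + 2)) ^ K ≤ (2 * ((n : ℝ) + 2)) ^ (K + 1) :=
            pow_le_pow_right₀ hA (Nat.le_succ K)
        _ ≤ 2 * (2 * ((n : ℝ) + 2)) ^ (K + 1) := by nlinarith [pow_pos (by linarith : (0:ℝ) < 2 * ((n:ℝ)+2)) (K+1)]
    exact mul_le_mul_of_nonneg_right h1 (Nat.cast_nonneg _)
  calc Bk n K * (‖ξ‖ ^ K)⁻¹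
      ≤ 2 * (2 * ((n : ℝ) + 2)) ^ (K + 1) * (Nat.factorial K : ℝ) * (‖ξ‖ ^ K)⁻¹ :=
        mul_le_mul_of_nonneg_right hBkle (by positivity)
    _ = _ := by rw [hK]

theorem stmt4 (n : ℕ) (hn : 1 ≤ n) :
    ∃ A₀ : ℝ, 0 < A₀ ∧ ∀ (α : Fin n → ℕ) (ξ : E n), ξ ≠ 0 → ∀ j : Fin n,
      |mderiv α (fun ζ => ζ j / ‖ζ‖) ξ| ≤
        2 * A₀ ^ (∑ i, α i + 1) * (Nat.factorial (∑ i, α i) : ℝ) *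
          ‖ξ‖ ^ (-(∑ i, α i : ℝ)) := stmt4' n hn
end
end

section
/- There exists a constant A₀ > 0 such that for all multi-indices α, β with |β| ≤ 1, all x ∈ ℝⁿ and ξ ∈ ℝⁿ \ {0}: |∂_ξ^α ∂_x^β (x·ω)| ≤ A₀^{|α|+|β|+1} |α|! |β|! |x|^{1-|β|} |ξ|^{-|α|}, where ω = ξ/|ξ|; moreover ∂_x^β (x·ω) = 0 whenever |β| ≥ 2. -/
open Real
open scoped RealInnerProductSpace BigOperators

noncomputable section

/-- Partial derivative in the `i`-th `x`-coordinate direction. -/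
def pdx {n : ℕ} (i : Fin n) (f : E n × E n → ℝ) : E n × E n → ℝ :=
  fun p => fderiv ℝ (fun x => f (x, p.2)) p.1 (EuclideanSpace.single i 1)

/-- Partial derivative in the `i`-th `ξ`-coordinate direction. -/
def pdxi {n : ℕ} (i : Fin n) (f : E n × E n → ℝ) : E n × E n → ℝ :=
  fun p => fderiv ℝ (fun ξ => f (p.1, ξ)) p.2 (EuclideanSpace.single i 1)

/-- Multi-index derivative `∂_x^β`. -/
def mderivX {n : ℕ} (β : Fin n → ℕ) (f : E n × E n → ℝ) : E n × E n → ℝ :=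
  (List.finRange n).foldr (fun i g => (pdx i)^[β i] g) f

/-- Multi-index derivative `∂_ξ^α`. -/
def mderivXi {n : ℕ} (α : Fin n → ℕ) (f : E n × E n → ℝ) : E n × E n → ℝ :=
  (List.finRange n).foldr (fun i g => (pdxi i)^[α i] g) f

namespace Stmt5

variable {n : ℕ}

/-- directional derivative operator -/
def Dv (v : E n) (A : E n → ℝ) : E n → ℝ := fun ξ => fderiv ℝ A ξ v

abbrev Tm (n : ℕ) := ℝ × List (E n) × ℕ

def Pl (l : List (E n)) (ξ : E n) : ℝ := (l.map (fun a => ⟪a, ξ⟫)).prod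

def tval (t : Tm n) (ξ : E n) : ℝ := t.1 * (Pl t.2.1 ξ * (‖ξ‖ ^ t.2.2)⁻¹)

def rval (R : List (Tm n)) (ξ : E n) : ℝ := (R.map fun t => tval t ξ).sum

def twt (t : Tm n) : ℝ := |t.1| * (t.2.1.map (fun a => ‖a‖)).prod

def rwt (R : List (Tm n)) : ℝ := (R.map twt).sum

def pick (v : E n) : List (E n) → List (ℝ × List (E n))
  | [] => []
  | a :: l => (⟪a, v⟫, l) :: (pick v l).map (fun q => (q.1, a :: q.2))

def tderiv (v : E n) (t : Tm n) : List (Tm n) :=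
  (pick v t.2.1).map (fun q => (t.1 * q.1, q.2, t.2.2)) ++
    [(-(t.2.2 : ℝ) * t.1, v :: t.2.1, t.2.2 + 2)]

def rderiv (v : E n) (R : List (Tm n)) : List (Tm n) := R.flatMap (tderiv v)

def dPl : List (E n) → E n → (E n →L[ℝ] ℝ)
  | [] => fun _ => 0
  | a :: l => fun ξ => ⟪a, ξ⟫ • dPl l ξ + Pl l ξ • innerSL ℝ a

lemma Pl_nil (ξ : E n) : Pl ([] : List (E n)) ξ = 1 := rfl

lemma Pl_cons (a : E n) (l : List (E n)) (ξ : E n) :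
    Pl (a :: l) ξ = ⟪a, ξ⟫ * Pl l ξ := by simp [Pl]

lemma hasFDerivAt_Pl (l : List (E n)) (ξ : E n) : HasFDerivAt (Pl l) (dPl l ξ) ξ := by
  induction l with
  | nil =>
    have : (Pl ([] : List (E n))) = fun _ : E n => (1:ℝ) := funext fun ξ => rfl
    rw [this, dPl]
    exact hasFDerivAt_const 1 ξ
  | cons a l ih =>
    have he : (Pl (a :: l)) = fun ξ : E n => ⟪a, ξ⟫ * Pl l ξ := funext fun ξ => Pl_cons a l ξ
    rw [he, dPl]
    have h1 : HasFDerivAt (fun ξ : E n => ⟪a, ξ⟫) (innerSL ℝ a) ξ := by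
      simpa using (innerSL ℝ a).hasFDerivAt (x := ξ)
    exact h1.mul ih

lemma dPl_apply (l : List (E n)) (ξ v : E n) :
    dPl l ξ v = ((pick v l).map fun q => q.1 * Pl q.2 ξ).sum := by
  induction l with
  | nil => simp [dPl, pick]
  | cons a l ih =>
    simp only [dPl, pick, List.map_cons, List.map_map, List.sum_cons,
      ContinuousLinearMap.add_apply, ContinuousLinearMap.smul_apply, innerSL_apply_apply, smul_eq_mul]
    rw [ih]
    have : ((pick v l).map ((fun q : ℝ × List (E n) => q.1 * Pl q.2 ξ) ∘
        (fun q : ℝ × List (E n) => (q.1, a :: q.2)))) =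
        (pick v l).map (fun q => ⟪a, ξ⟫ * (q.1 * Pl q.2 ξ)) := by
      apply List.map_congr_left
      intro q _
      simp [Function.comp, Pl_cons]
      ring
    rw [this, List.sum_map_mul_left]
    ring



lemma hasFDerivAt_norm' {ξ : E n} (hξ : ξ ≠ 0) :
    HasFDerivAt (fun ξ : E n => ‖ξ‖) (‖ξ‖⁻¹ • innerSL ℝ ξ) ξ := by
  have h0 : ‖ξ‖ ≠ 0 := norm_ne_zero_iff.mpr hξ
  have h1 : HasFDerivAt (fun x : E n => ‖x‖ ^ 2) (2 • innerSL ℝ ξ) ξ :=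
    (hasStrictFDerivAt_norm_sq ξ).hasFDerivAt
  have h2 : HasDerivAt (√·) (1 / (2 * √(‖ξ‖ ^ 2))) (‖ξ‖ ^ 2) :=
    Real.hasDerivAt_sqrt (by positivity)
  have h3 := h2.comp_hasFDerivAt ξ h1
  have e1 : ((√·) ∘ (fun x : E n => ‖x‖ ^ 2)) = fun x : E n => ‖x‖ :=
    funext fun x => by simp [Function.comp, Real.sqrt_sq (norm_nonneg x)]
  rw [e1] at h3
  refine h3.congr_fderiv ?_
  rw [Real.sqrt_sq (norm_nonneg ξ)]
  ext y
  simp only [ContinuousLinearMap.smul_apply, smul_eq_mul, ContinuousLinearMap.coe_smul',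
    Pi.smul_apply, nsmul_eq_mul, Nat.cast_ofNat]
  field_simp

lemma hasFDerivAt_Q (m : ℕ) {ξ : E n} (hξ : ξ ≠ 0) :
    HasFDerivAt (fun ξ : E n => (‖ξ‖ ^ m)⁻¹)
      ((-(m : ℝ) * (‖ξ‖ ^ (m + 2))⁻¹) • innerSL ℝ ξ) ξ := by
  have h0 : ‖ξ‖ ≠ 0 := norm_ne_zero_iff.mpr hξ
  have hp : HasDerivAt (fun t : ℝ => (t ^ m)⁻¹)
      (-(↑m * ‖ξ‖ ^ (m - 1)) / (‖ξ‖ ^ m) ^ 2) ‖ξ‖ :=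
    (hasDerivAt_pow m ‖ξ‖).inv (pow_ne_zero m h0)
  have h3 := hp.comp_hasFDerivAt ξ (hasFDerivAt_norm' hξ)
  have e1 : ((fun t : ℝ => (t ^ m)⁻¹) ∘ (fun x : E n => ‖x‖)) =
      fun x : E n => (‖x‖ ^ m)⁻¹ := rfl
  rw [e1] at h3
  refine h3.congr_fderiv ?_
  rw [smul_smul]
  congr 1
  rcases Nat.eq_zero_or_pos m with hm | hm
  · subst hm; simp
  · obtain ⟨k, rfl⟩ : ∃ k, m = k + 1 := ⟨m - 1, by omega⟩
    simp only [Nat.add_sub_cancel]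
    field_simp
    ring

lemma rval_nil (ξ : E n) : rval ([] : List (Tm n)) ξ = 0 := rfl

lemma rval_cons (t : Tm n) (R : List (Tm n)) (ξ : E n) :
    rval (t :: R) ξ = tval t ξ + rval R ξ := by simp [rval]

lemma rval_append (R S : List (Tm n)) (ξ : E n) :
    rval (R ++ S) ξ = rval R ξ + rval S ξ := by simp [rval]

lemma hasFDerivAt_tval (t : Tm n) {ξ : E n} (hξ : ξ ≠ 0) :
    HasFDerivAt (tval t)
      (t.1 • (Pl t.2.1 ξ • ((-(t.2.2 : ℝ) * (‖ξ‖ ^ (t.2.2 + 2))⁻¹) • innerSL ℝ ξ) +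
        (‖ξ‖ ^ t.2.2)⁻¹ • dPl t.2.1 ξ)) ξ := by
  obtain ⟨c, l, m⟩ := t
  have h := ((hasFDerivAt_Pl l ξ).mul (hasFDerivAt_Q m hξ)).const_mul c
  exact h

lemma tval_deriv_apply (t : Tm n) {ξ : E n} (hξ : ξ ≠ 0) (v : E n) :
    (t.1 • (Pl t.2.1 ξ • ((-(t.2.2 : ℝ) * (‖ξ‖ ^ (t.2.2 + 2))⁻¹) • innerSL ℝ ξ) +
        (‖ξ‖ ^ t.2.2)⁻¹ • dPl t.2.1 ξ)) v = rval (tderiv v t) ξ := by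
  obtain ⟨c, l, m⟩ := t
  simp only [tderiv, rval, List.map_append, List.sum_append, List.map_map, List.map_cons,
    List.map_nil, List.sum_cons, List.sum_nil, ContinuousLinearMap.smul_apply,
    ContinuousLinearMap.add_apply, innerSL_apply_apply, smul_eq_mul]
  have e1 : ((pick v l).map ((fun t : Tm n => tval t ξ) ∘
      (fun q : ℝ × List (E n) => ((c * q.1, q.2, m) : Tm n)))) =
      (pick v l).map (fun q => (c * (‖ξ‖ ^ m)⁻¹) * (q.1 * Pl q.2 ξ)) := by
    apply List.map_congr_left
    intro q _
    simp [Function.comp, tval]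
    ring
  rw [e1, List.sum_map_mul_left, dPl_apply]
  simp only [tval, Pl_cons]
  rw [real_inner_comm ξ v]
  ring

lemma hasFDerivAt_rval (R : List (Tm n)) {ξ : E n} (hξ : ξ ≠ 0) :
    ∃ D : E n →L[ℝ] ℝ, HasFDerivAt (rval R) D ξ ∧ ∀ v, D v = rval (rderiv v R) ξ := by
  induction R with
  | nil =>
    refine ⟨0, ?_, ?_⟩
    · have : (rval ([] : List (Tm n))) = fun _ : E n => (0:ℝ) := funext fun _ => rfl
      rw [this]; exact hasFDerivAt_const 0 ξ
    · intro v; simp [rderiv, rval]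
  | cons t R ih =>
    obtain ⟨D, hD, hDv⟩ := ih
    refine ⟨(t.1 • (Pl t.2.1 ξ • ((-(t.2.2 : ℝ) * (‖ξ‖ ^ (t.2.2 + 2))⁻¹) • innerSL ℝ ξ) +
        (‖ξ‖ ^ t.2.2)⁻¹ • dPl t.2.1 ξ)) + D, ?_, ?_⟩
    · have : (rval (t :: R)) = fun ξ : E n => tval t ξ + rval R ξ :=
        funext fun ξ => rval_cons t R ξ
      rw [this]
      exact (hasFDerivAt_tval t hξ).add hD
    · intro v
      simp only [ContinuousLinearMap.add_apply, hDv, rderiv, List.flatMap_cons]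
      rw [rval_append, tval_deriv_apply t hξ v]

lemma Dv_eq (R : List (Tm n)) (g : E n → ℝ) (hg : ∀ ξ : E n, ξ ≠ 0 → g ξ = rval R ξ)
    (v : E n) {ξ : E n} (hξ : ξ ≠ 0) :
    Dv v g ξ = rval (rderiv v R) ξ := by
  obtain ⟨D, hD, hDv⟩ := hasFDerivAt_rval R hξ
  have hU : {y : E n | y ≠ 0} ∈ nhds ξ := by
    have : IsOpen {y : E n | y ≠ 0} := isOpen_compl_singleton
    exact this.mem_nhds hξ
  have heq : g =ᶠ[nhds ξ] rval R := by
    filter_upwards [hU] with y hy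
    exact hg y hy
  rw [Dv, heq.fderiv_eq, hD.fderiv, hDv]


lemma prodn_nonneg (l : List (E n)) : 0 ≤ (l.map (fun a => ‖a‖)).prod := by
  apply List.prod_nonneg
  intro a ha
  obtain ⟨b, _, rfl⟩ := List.mem_map.mp ha
  exact norm_nonneg b

lemma twt_nonneg (t : Tm n) : 0 ≤ twt t :=
  mul_nonneg (abs_nonneg _) (prodn_nonneg _)

lemma rwt_nonneg (R : List (Tm n)) : 0 ≤ rwt R := by
  apply List.sum_nonneg
  intro a ha
  obtain ⟨t, _, rfl⟩ := List.mem_map.mp ha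
  exact twt_nonneg t

lemma rwt_append (R S : List (Tm n)) : rwt (R ++ S) = rwt R + rwt S := by simp [rwt]

lemma rwt_cons (t : Tm n) (R : List (Tm n)) : rwt (t :: R) = twt t + rwt R := by simp [rwt]

lemma abs_list_sum_le : ∀ l : List ℝ, |l.sum| ≤ (l.map abs).sum := by
  intro l
  induction l with
  | nil => simp
  | cons a l ih =>
    simp only [List.sum_cons, List.map_cons]
    calc |a + l.sum| ≤ |a| + |l.sum| := abs_add_le _ _
    _ ≤ |a| + (l.map abs).sum := by linarith

lemma abs_Pl_le (l : List (E n)) (ξ : E n) :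
    |Pl l ξ| ≤ (l.map (fun a => ‖a‖)).prod * ‖ξ‖ ^ l.length := by
  induction l with
  | nil => simp [Pl]
  | cons a l ih =>
    calc |Pl (a :: l) ξ| = |⟪a, ξ⟫| * |Pl l ξ| := by rw [Pl_cons, abs_mul]
    _ ≤ (‖a‖ * ‖ξ‖) * ((l.map (fun a => ‖a‖)).prod * ‖ξ‖ ^ l.length) := by
        apply mul_le_mul (abs_real_inner_le_norm a ξ) ih (abs_nonneg _) (by positivity)
    _ = ((a :: l).map (fun a => ‖a‖)).prod * ‖ξ‖ ^ (a :: l).length := by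
        simp [pow_succ]; ring

lemma pick_length {v : E n} : ∀ {l : List (E n)} {q}, q ∈ pick v l → q.2.length + 1 = l.length := by
  intro l
  induction l with
  | nil => intro q hq; simp [pick] at hq
  | cons a l ih =>
    intro q hq
    rcases List.mem_cons.mp hq with h | h
    · subst h; simp
    · obtain ⟨q', hq', rfl⟩ := List.mem_map.mp h
      have h2 := ih hq'
      simp only [List.length_cons]
      omega

lemma pick_wt {v : E n} (hv : ‖v‖ ≤ 1) (l : List (E n)) :
    ((pick v l).map (fun q => |q.1| * (q.2.map (fun a => ‖a‖)).prod)).sum ≤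
      l.length * (l.map (fun a => ‖a‖)).prod := by
  induction l with
  | nil => simp [pick]
  | cons a l ih =>
    simp only [pick, List.map_cons, List.sum_cons, List.map_map]
    have e1 : ((pick v l).map ((fun q : ℝ × List (E n) => |q.1| * (q.2.map (fun a => ‖a‖)).prod) ∘
        (fun q : ℝ × List (E n) => (q.1, a :: q.2)))) =
        (pick v l).map (fun q => ‖a‖ * (|q.1| * (q.2.map (fun b => ‖b‖)).prod)) := by
      apply List.map_congr_left
      intro q _
      simp [Function.comp]
      ring
    rw [e1, List.sum_map_mul_left]
    have h1 : |⟪a, v⟫| ≤ ‖a‖ := by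
      calc |⟪a, v⟫| ≤ ‖a‖ * ‖v‖ := abs_real_inner_le_norm a v
      _ ≤ ‖a‖ * 1 := by
          exact mul_le_mul_of_nonneg_left hv (norm_nonneg a)
      _ = ‖a‖ := mul_one _
    have h2 : ‖a‖ * ((pick v l).map (fun q => |q.1| * (q.2.map (fun b => ‖b‖)).prod)).sum ≤
        ‖a‖ * (l.length * (l.map (fun b => ‖b‖)).prod) :=
      mul_le_mul_of_nonneg_left ih (norm_nonneg a)
    have h3 : |⟪a, v⟫| * (l.map (fun b => ‖b‖)).prod ≤ ‖a‖ * (l.map (fun b => ‖b‖)).prod :=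
      mul_le_mul_of_nonneg_right h1 (prodn_nonneg l)
    calc |⟪a, v⟫| * (l.map (fun b => ‖b‖)).prod +
          ‖a‖ * ((pick v l).map (fun q => |q.1| * (q.2.map (fun b => ‖b‖)).prod)).sum ≤
        ‖a‖ * (l.map (fun b => ‖b‖)).prod + ‖a‖ * (l.length * (l.map (fun b => ‖b‖)).prod) :=
          add_le_add h3 h2
    _ = (l.length + 1) * (‖a‖ * (l.map (fun b => ‖b‖)).prod) := by ring
    _ = ((a :: l).length : ℝ) * ((a :: l).map (fun b => ‖b‖)).prod := by
        simp only [List.length_cons, List.map_cons, List.prod_cons]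
        push_cast
        ring

lemma rwt_tderiv {v : E n} (hv : ‖v‖ ≤ 1) (t : Tm n) :
    rwt (tderiv v t) ≤ ((t.2.1.length : ℝ) + t.2.2) * twt t := by
  obtain ⟨c, l, m⟩ := t
  simp only [tderiv, rwt, List.map_append, List.sum_append, List.map_map, List.map_cons,
    List.map_nil, List.sum_cons, List.sum_nil, add_zero]
  have e1 : ((pick v l).map ((fun t : Tm n => twt t) ∘
      (fun q : ℝ × List (E n) => ((c * q.1, q.2, m) : Tm n)))) =
      (pick v l).map (fun q => |c| * (|q.1| * (q.2.map (fun b => ‖b‖)).prod)) := by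
    apply List.map_congr_left
    intro q _
    simp [Function.comp, twt, abs_mul]
    ring
  rw [e1, List.sum_map_mul_left]
  have h2 : |c| * ((pick v l).map (fun q => |q.1| * (q.2.map (fun b => ‖b‖)).prod)).sum ≤
      |c| * (l.length * (l.map (fun b => ‖b‖)).prod) :=
    mul_le_mul_of_nonneg_left (pick_wt hv l) (abs_nonneg c)
  have h3 : twt ((-(m : ℝ) * c, v :: l, m + 2) : Tm n) ≤ (m : ℝ) * twt ((c, l, m) : Tm n) := by
    simp only [twt, List.map_cons, List.prod_cons, abs_mul, abs_neg, Nat.abs_cast]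
    calc (m : ℝ) * |c| * (‖v‖ * (l.map (fun b => ‖b‖)).prod) ≤
        (m : ℝ) * |c| * (1 * (l.map (fun b => ‖b‖)).prod) := by
          apply mul_le_mul_of_nonneg_left
          · exact mul_le_mul_of_nonneg_right hv (prodn_nonneg l)
          · positivity
    _ = (m : ℝ) * (|c| * (l.map (fun b => ‖b‖)).prod) := by ring
  calc |c| * ((pick v l).map (fun q => |q.1| * (q.2.map (fun b => ‖b‖)).prod)).sum +
        twt ((-(m : ℝ) * c, v :: l, m + 2) : Tm n) ≤
      |c| * (l.length * (l.map (fun b => ‖b‖)).prod) + (m : ℝ) * twt ((c, l, m) : Tm n) :=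
        add_le_add h2 h3
  _ = ((l.length : ℝ) + m) * twt ((c, l, m) : Tm n) := by
      simp only [twt]
      ring

def Good (k : ℕ) (W : ℝ) (g : E n → ℝ) : Prop :=
  ∃ R : List (Tm n), (∀ t ∈ R, t.2.2 = t.2.1.length + k ∧ t.2.2 ≤ 2 * k + 1) ∧
    rwt R ≤ W ∧ ∀ ξ : E n, ξ ≠ 0 → g ξ = rval R ξ

lemma Good_step (v : E n) (hv : ‖v‖ ≤ 1) {k : ℕ} {W : ℝ} {g : E n → ℝ}
    (h : Good k W g) : Good (k + 1) (3 * ((k : ℝ) + 1) * W) (Dv v g) := by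
  obtain ⟨R, hinv, hw, hval⟩ := h
  refine ⟨rderiv v R, ?_, ?_, fun ξ hξ => Dv_eq R g hval v hξ⟩
  · intro t' ht'
    obtain ⟨t, htR, ht'mem⟩ := List.mem_flatMap.mp ht'
    obtain ⟨c, l, m⟩ := t
    have hm1 : m = l.length + k := (hinv _ htR).1
    have hm2 : m ≤ 2 * k + 1 := (hinv _ htR).2
    rcases List.mem_append.mp ht'mem with h | h
    · obtain ⟨q, hq, rfl⟩ := List.mem_map.mp h
      have hlen : q.2.length + 1 = l.length := pick_length hq
      refine ⟨?_, ?_⟩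
      · show m = q.2.length + (k + 1)
        omega
      · show m ≤ 2 * (k + 1) + 1
        omega
    · simp only [List.mem_singleton] at h
      subst h
      refine ⟨?_, ?_⟩
      · show m + 2 = (v :: l).length + (k + 1)
        simp only [List.length_cons]
        omega
      · show m + 2 ≤ 2 * (k + 1) + 1
        omega
  · have key : ∀ R' : List (Tm n), (∀ t ∈ R', t.2.2 = t.2.1.length + k ∧ t.2.2 ≤ 2 * k + 1) →
        rwt (rderiv v R') ≤ 3 * ((k : ℝ) + 1) * rwt R' := by
      intro R'
      induction R' with
      | nil => intro _; simp [rderiv, rwt]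
      | cons t R' ih =>
        intro hi
        have h1 : rwt (rderiv v (t :: R')) = rwt (tderiv v t) + rwt (rderiv v R') := by
          rw [rderiv, List.flatMap_cons, rwt_append]; rfl
        rw [h1, rwt_cons]
        have h2 := rwt_tderiv hv t
        obtain ⟨e1, e2⟩ := hi t List.mem_cons_self
        have h4 : ((t.2.1.length : ℝ) + t.2.2) ≤ 3 * ((k : ℝ) + 1) := by
          have : t.2.1.length + t.2.2 ≤ 3 * (k + 1) := by omega
          calc ((t.2.1.length : ℝ) + t.2.2) = ((t.2.1.length + t.2.2 : ℕ) : ℝ) := by push_cast; ring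
          _ ≤ ((3 * (k + 1) : ℕ) : ℝ) := Nat.cast_le.mpr this
          _ = 3 * ((k : ℝ) + 1) := by push_cast; ring
        have h5 : rwt (tderiv v t) ≤ 3 * ((k : ℝ) + 1) * twt t :=
          le_trans h2 (mul_le_mul_of_nonneg_right h4 (twt_nonneg t))
        have h6 := ih (fun u hu => hi u (List.mem_cons_of_mem t hu))
        calc rwt (tderiv v t) + rwt (rderiv v R') ≤
            3 * ((k : ℝ) + 1) * twt t + 3 * ((k : ℝ) + 1) * rwt R' := add_le_add h5 h6
        _ = 3 * ((k : ℝ) + 1) * (twt t + rwt R') := by ring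
    calc rwt (rderiv v R) ≤ 3 * ((k : ℝ) + 1) * rwt R := key R hinv
    _ ≤ 3 * ((k : ℝ) + 1) * W := by
        apply mul_le_mul_of_nonneg_left hw
        positivity

lemma Good_eval {k : ℕ} {W : ℝ} {g : E n → ℝ} (h : Good k W g) {ξ : E n} (hξ : ξ ≠ 0) :
    |g ξ| ≤ W * (‖ξ‖ ^ k)⁻¹ := by
  obtain ⟨R, hinv, hw, hval⟩ := h
  have hn0 : (0 : ℝ) < ‖ξ‖ := norm_pos_iff.mpr hξ
  rw [hval ξ hξ]
  have h1 : |rval R ξ| ≤ ((R.map fun t => |tval t ξ|).sum) := by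
    rw [rval]
    calc |(R.map fun t => tval t ξ).sum| ≤ ((R.map fun t => tval t ξ).map abs).sum :=
      abs_list_sum_le _
    _ = (R.map fun t => |tval t ξ|).sum := by rw [List.map_map]; rfl
  have h2 : ∀ t ∈ R, |tval t ξ| ≤ twt t * (‖ξ‖ ^ k)⁻¹ := by
    intro t ht
    obtain ⟨c, l, m⟩ := t
    obtain ⟨e1, _⟩ := hinv _ ht
    simp only at e1
    have : |tval ((c, l, m) : Tm n) ξ| = |c| * |Pl l ξ| * (‖ξ‖ ^ m)⁻¹ := by
      rw [tval, abs_mul, abs_mul, abs_inv, abs_pow, abs_norm]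
      ring
    rw [this, e1]
    calc |c| * |Pl l ξ| * (‖ξ‖ ^ (l.length + k))⁻¹ ≤
        |c| * ((l.map (fun a => ‖a‖)).prod * ‖ξ‖ ^ l.length) * (‖ξ‖ ^ (l.length + k))⁻¹ := by
          apply mul_le_mul_of_nonneg_right _ (by positivity)
          exact mul_le_mul_of_nonneg_left (abs_Pl_le l ξ) (abs_nonneg c)
    _ = twt ((c, l, m) : Tm n) * (‖ξ‖ ^ k)⁻¹ := by
        rw [twt, pow_add]
        field_simp
  calc |rval R ξ| ≤ ((R.map fun t => |tval t ξ|).sum) := h1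
  _ ≤ ((R.map fun t => twt t * (‖ξ‖ ^ k)⁻¹).sum) := by
      exact List.sum_le_sum h2
  _ = rwt R * (‖ξ‖ ^ k)⁻¹ := by
      rw [rwt, ← List.sum_map_mul_right]
  _ ≤ W * (‖ξ‖ ^ k)⁻¹ := mul_le_mul_of_nonneg_right hw (by positivity)


lemma Good_init (c : E n) : Good 0 ‖c‖ (fun ξ : E n => ⟪c, ξ⟫ / ‖ξ‖) := by
  refine ⟨[(1, [c], 1)], ?_, ?_, ?_⟩
  · intro t ht
    simp only [List.mem_singleton] at ht
    subst ht
    exact ⟨rfl, le_refl _⟩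
  · simp [rwt, twt]
  · intro ξ hξ
    simp [rval, tval, Pl, pow_one, div_eq_mul_inv]

def DL (L : List (E n)) (A : E n → ℝ) : E n → ℝ := L.foldr Dv A

lemma Good_DL (L : List (E n)) (hL : ∀ v ∈ L, ‖v‖ ≤ 1) (W : ℝ) :
    ∀ (k : ℕ) (g : E n → ℝ), Good k ((3:ℝ) ^ k * (k.factorial : ℝ) * W) g →
      Good (k + L.length) ((3:ℝ) ^ (k + L.length) * ((k + L.length).factorial : ℝ) * W)
        (DL L g) := by
  induction L with
  | nil => intro k g h; simpa [DL] using h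
  | cons v L ih =>
    intro k g h
    have h1 := ih (fun u hu => hL u (List.mem_cons_of_mem v hu)) k g h
    have h2 := Good_step v (hL v List.mem_cons_self) h1
    have ec : 3 * ((↑(k + L.length) : ℝ) + 1) *
        ((3:ℝ) ^ (k + L.length) * ((k + L.length).factorial : ℝ) * W) =
        (3:ℝ) ^ (k + L.length + 1) * (((k + L.length + 1).factorial : ℝ)) * W := by
      rw [Nat.factorial_succ]
      push_cast
      ring
    rw [ec] at h2
    have e2 : k + (v :: L).length = k + L.length + 1 := by simp [List.length_cons]; omega
    rw [e2]
    exact h2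

lemma pdxi_iter (i : Fin n) (m : ℕ) (g : E n × E n → ℝ) (x : E n) :
    (fun ξ => (pdxi i)^[m] g (x, ξ)) =
      (Dv (EuclideanSpace.single i 1))^[m] (fun ξ => g (x, ξ)) := by
  induction m with
  | zero => rfl
  | succ m ih =>
    rw [Function.iterate_succ_apply', Function.iterate_succ_apply', ← ih]
    rfl

lemma mderivXi_foldr (α : Fin n → ℕ) (g : E n × E n → ℝ) (x : E n) :
    (fun ξ => mderivXi α g (x, ξ)) =
      (List.finRange n).foldr (fun i A => (Dv (EuclideanSpace.single i 1))^[α i] A)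
        (fun ξ => g (x, ξ)) := by
  rw [mderivXi]
  generalize List.finRange n = l
  induction l with
  | nil => rfl
  | cons i l ih =>
    simp only [List.foldr_cons]
    rw [pdxi_iter, ih]

lemma Dv_iter_replicate (v : E n) (m : ℕ) (B : E n → ℝ) :
    (Dv v)^[m] B = DL (List.replicate m v) B := by
  induction m with
  | zero => rfl
  | succ m ih =>
    rw [Function.iterate_succ_apply', List.replicate_succ, DL, List.foldr_cons, ← DL, ih]

lemma foldr_Dv_flat (α : Fin n → ℕ) (A : E n → ℝ) (l : List (Fin n)) :
    l.foldr (fun i B => (Dv (EuclideanSpace.single i 1))^[α i] B) A =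
      DL (l.flatMap fun i => List.replicate (α i) ((EuclideanSpace.single i 1 : E n))) A := by
  induction l with
  | nil => rfl
  | cons i l ih =>
    simp only [List.foldr_cons, List.flatMap_cons]
    rw [DL, List.foldr_append, ← DL, ← DL, ih, Dv_iter_replicate]

lemma flat_length (α : Fin n → ℕ) :
    ((List.finRange n).flatMap
      fun i => List.replicate (α i) ((EuclideanSpace.single i 1 : E n))).length = ∑ i, α i := by
  rw [List.length_flatMap]
  show (List.map (fun i => (List.replicate (α i) ((EuclideanSpace.single i 1 : E n))).length)
    (List.finRange n)).sum = _
  simp only [List.length_replicate]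
  exact (Fin.sum_univ_def α).symm

lemma flat_norm (α : Fin n → ℕ) :
    ∀ v ∈ (List.finRange n).flatMap
      fun i => List.replicate (α i) ((EuclideanSpace.single i 1 : E n)), ‖v‖ ≤ 1 := by
  intro v hv
  obtain ⟨i, _, hv2⟩ := List.mem_flatMap.mp hv
  have := (List.eq_of_mem_replicate hv2)
  subst this
  rw [EuclideanSpace.norm_single]
  simp

lemma core (c : E n) (α : Fin n → ℕ) (x ξ : E n) (hξ : ξ ≠ 0) (g : E n × E n → ℝ)
    (hg : (fun ξ => g (x, ξ)) = fun ξ : E n => ⟪c, ξ⟫ / ‖ξ‖) :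
    |mderivXi α g (x, ξ)| ≤
      3 ^ (∑ i, α i) * (((∑ i, α i).factorial : ℝ)) * ‖c‖ * (‖ξ‖ ^ (∑ i, α i))⁻¹ := by
  set L := (List.finRange n).flatMap
      fun i => List.replicate (α i) ((EuclideanSpace.single i 1 : E n)) with hL
  have h0 : (fun ξ => mderivXi α g (x, ξ)) = DL L (fun ξ => g (x, ξ)) := by
    rw [mderivXi_foldr, foldr_Dv_flat]
  have hGood0 : Good 0 ((3:ℝ) ^ 0 * ((Nat.factorial 0 : ℕ) : ℝ) * ‖c‖) (fun ξ => g (x, ξ)) := by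
    rw [hg]
    simpa using Good_init c
  have h2 := Good_DL L (flat_norm α) ‖c‖ 0 _ hGood0
  rw [zero_add] at h2
  have h3 := Good_eval h2 hξ
  rw [← h0] at h3
  simp only at h3
  rw [hL, flat_length α] at h3
  exact h3

/-! ### The x-derivatives -/

lemma pdx_F (i : Fin n) :
    pdx i (fun p : E n × E n => ⟪p.1, p.2⟫ / ‖p.2‖) = fun p => p.2 i / ‖p.2‖ := by
  funext p
  show fderiv ℝ (fun x : E n => ⟪x, p.2⟫ / ‖p.2‖) p.1 (EuclideanSpace.single i 1) = _
  have e : (fun x : E n => ⟪x, p.2⟫ / ‖p.2‖) = ⇑(innerSL ℝ ((‖p.2‖)⁻¹ • p.2)) := by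
    funext y
    simp only [innerSL_apply_apply, real_inner_smul_left]
    rw [real_inner_comm]
    rw [div_eq_inv_mul]
  rw [e, ContinuousLinearMap.fderiv]
  simp only [innerSL_apply_apply, real_inner_smul_left]
  rw [EuclideanSpace.inner_single_right]
  simp only [conj_trivial, one_mul]
  rw [div_eq_inv_mul]

lemma pdx_const (i : Fin n) (g : E n → ℝ) :
    pdx i (fun p : E n × E n => g p.2) = 0 := by
  funext p
  show fderiv ℝ (fun _ : E n => g p.2) p.1 (EuclideanSpace.single i 1) = _
  rw [fderiv_fun_const]
  simp

lemma iter_pdx_zero (i : Fin n) (m : ℕ) : (pdx i)^[m] (0 : E n × E n → ℝ) = 0 := by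
  induction m with
  | zero => rfl
  | succ m ih =>
    rw [Function.iterate_succ_apply]
    have : pdx i (0 : E n × E n → ℝ) = 0 := pdx_const i (fun _ => 0)
    rw [this, ih]

lemma iter_pdx_hfun (i j : Fin n) (m : ℕ) (hm : 1 ≤ m) :
    (pdx i)^[m] (fun p : E n × E n => p.2 j / ‖p.2‖) = 0 := by
  obtain ⟨m', rfl⟩ : ∃ m', m = m' + 1 := ⟨m - 1, by omega⟩
  rw [Function.iterate_succ_apply]
  have : pdx i (fun p : E n × E n => p.2 j / ‖p.2‖) = 0 :=
    pdx_const i (fun ξ => ξ j / ‖ξ‖)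
  rw [this, iter_pdx_zero]

lemma iter_pdx_F_ge2 (i : Fin n) (m : ℕ) :
    (pdx i)^[m + 2] (fun p : E n × E n => ⟪p.1, p.2⟫ / ‖p.2‖) = 0 := by
  rw [Function.iterate_succ_apply]
  have h1 : (pdx i)^[1] (fun p : E n × E n => ⟪p.1, p.2⟫ / ‖p.2‖) =
      fun p : E n × E n => p.2 i / ‖p.2‖ := by
    rw [Function.iterate_one, pdx_F]
  rw [show (pdx i) (fun p : E n × E n => ⟪p.1, p.2⟫ / ‖p.2‖) =
      fun p : E n × E n => p.2 i / ‖p.2‖ from pdx_F i]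
  exact iter_pdx_hfun i i (m + 1) (by omega)

lemma mderivX_cases (β : Fin n → ℕ) (l : List (Fin n)) :
    ((l.map β).sum = 0 →
      l.foldr (fun i h => (pdx i)^[β i] h) (fun p : E n × E n => ⟪p.1, p.2⟫ / ‖p.2‖) =
        fun p : E n × E n => ⟪p.1, p.2⟫ / ‖p.2‖) ∧
    ((l.map β).sum = 1 →
      ∃ j, l.foldr (fun i h => (pdx i)^[β i] h) (fun p : E n × E n => ⟪p.1, p.2⟫ / ‖p.2‖) =
        fun p : E n × E n => p.2 j / ‖p.2‖) ∧
    (2 ≤ (l.map β).sum →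
      l.foldr (fun i h => (pdx i)^[β i] h) (fun p : E n × E n => ⟪p.1, p.2⟫ / ‖p.2‖) = 0) := by
  induction l with
  | nil =>
    refine ⟨fun _ => rfl, fun h => by simp at h, fun h => by simp at h⟩
  | cons i l ih =>
    obtain ⟨ih0, ih1, ih2⟩ := ih
    simp only [List.map_cons, List.sum_cons, List.foldr_cons]
    refine ⟨?_, ?_, ?_⟩
    · intro h
      have hb : β i = 0 := by omega
      have ht : (l.map β).sum = 0 := by omega
      rw [hb, ih0 ht]
      rfl
    · intro h
      by_cases hb : β i = 0
      · have ht : (l.map β).sum = 1 := by omega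
        obtain ⟨j, hj⟩ := ih1 ht
        refine ⟨j, ?_⟩
        rw [hb, hj]
        rfl
      · have hb1 : β i = 1 := by omega
        have ht : (l.map β).sum = 0 := by omega
        refine ⟨i, ?_⟩
        rw [hb1, ih0 ht, Function.iterate_one, pdx_F]
    · intro h
      rcases Nat.lt_or_ge ((l.map β).sum) 1 with ht | ht
      · have ht0 : (l.map β).sum = 0 := by omega
        have hb : 2 ≤ β i := by omega
        rw [ih0 ht0]
        obtain ⟨m, hm⟩ : ∃ m, β i = m + 2 := ⟨β i - 2, by omega⟩
        rw [hm]
        exact iter_pdx_F_ge2 i m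
      · rcases Nat.lt_or_ge ((l.map β).sum) 2 with ht2 | ht2
        · have ht1 : (l.map β).sum = 1 := by omega
          obtain ⟨j, hj⟩ := ih1 ht1
          rw [hj]
          exact iter_pdx_hfun i j (β i) (by omega)
        · rw [ih2 ht2]
          exact iter_pdx_zero i (β i)

end Stmt5

theorem stmt5 (n : ℕ) (hn : 1 ≤ n) :
    ∃ A₀ : ℝ, 0 < A₀ ∧ ∀ (α β : Fin n → ℕ) (x ξ : E n), ξ ≠ 0 →
      ((∑ i, β i) ≤ 1 →
        |mderivXi α (mderivX β (fun p => ⟪p.1, p.2⟫ / ‖p.2‖)) (x, ξ)| ≤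
          A₀ ^ (∑ i, α i + ∑ i, β i + 1) * (Nat.factorial (∑ i, α i) : ℝ) *
            (Nat.factorial (∑ i, β i) : ℝ) * ‖x‖ ^ ((1:ℝ) - (∑ i, β i : ℝ)) *
            ‖ξ‖ ^ (-(∑ i, α i : ℝ)))
      ∧ (2 ≤ ∑ i, β i →
        mderivX β (fun p => ⟪p.1, p.2⟫ / ‖p.2‖) (x, ξ) = 0) := by
  refine ⟨3, by norm_num, ?_⟩
  intro α β x ξ hξ
  obtain ⟨c0, c1, c2⟩ := Stmt5.mderivX_cases β (List.finRange n)
  have hsum : ((List.finRange n).map β).sum = ∑ i, β i := (Fin.sum_univ_def β).symm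
  have hk : ‖ξ‖ ^ (-((∑ i, α i : ℕ) : ℝ)) = (‖ξ‖ ^ (∑ i, α i))⁻¹ := by
    rw [Real.rpow_neg (norm_nonneg ξ), Real.rpow_natCast]
  have hca : (∑ i : Fin n, ((α i : ℕ) : ℝ)) = ((∑ i, α i : ℕ) : ℝ) := (Nat.cast_sum _ _).symm
  have hcb : (∑ i : Fin n, ((β i : ℕ) : ℝ)) = ((∑ i, β i : ℕ) : ℝ) := (Nat.cast_sum _ _).symm
  constructor
  · intro hβ
    rcases Nat.le_one_iff_eq_zero_or_eq_one.mp hβ with h0 | h1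
    · have hXf : mderivX β (fun p : E n × E n => ⟪p.1, p.2⟫ / ‖p.2‖) =
          fun p : E n × E n => ⟪p.1, p.2⟫ / ‖p.2‖ := c0 (by rw [hsum]; exact h0)
      rw [hXf, hca, hcb, h0]
      have hb := Stmt5.core x α x ξ hξ (fun p : E n × E n => ⟪p.1, p.2⟫ / ‖p.2‖) rfl
      simp only [Nat.factorial_zero, Nat.cast_zero, Nat.cast_one, sub_zero, Real.rpow_one,
        add_zero, mul_one]
      rw [hk]
      refine le_trans hb ?_
      have h3 : (3:ℝ) ^ (∑ i, α i) ≤ 3 ^ (∑ i, α i + 1) := by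
        gcongr
        · norm_num
        · omega
      exact mul_le_mul_of_nonneg_right
        (mul_le_mul_of_nonneg_right
          (mul_le_mul_of_nonneg_right h3 (Nat.cast_nonneg _)) (norm_nonneg x))
        (by positivity)
    · obtain ⟨j, hj⟩ := c1 (by rw [hsum]; exact h1)
      have hXf : mderivX β (fun p : E n × E n => ⟪p.1, p.2⟫ / ‖p.2‖) =
          fun p : E n × E n => p.2 j / ‖p.2‖ := hj
      rw [hXf, hca, hcb, h1]
      have hg : (fun ξ' : E n => (fun p : E n × E n => p.2 j / ‖p.2‖) (x, ξ')) =
          fun ξ' : E n => ⟪EuclideanSpace.single j (1:ℝ), ξ'⟫ / ‖ξ'‖ := by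
        funext ξ'
        rw [EuclideanSpace.inner_single_left]
        simp
      have hb := Stmt5.core (EuclideanSpace.single j (1:ℝ)) α x ξ hξ
        (fun p : E n × E n => p.2 j / ‖p.2‖) hg
      rw [EuclideanSpace.norm_single, norm_one, mul_one] at hb
      simp only [Nat.factorial_one, Nat.cast_one, sub_self, Real.rpow_zero, mul_one]
      rw [hk]
      refine le_trans hb ?_
      have h3 : (3:ℝ) ^ (∑ i, α i) ≤ 3 ^ (∑ i, α i + 1 + 1) := by
        gcongr
        · norm_num
        · omega
      exact mul_le_mul_of_nonneg_right
        (mul_le_mul_of_nonneg_right h3 (Nat.cast_nonneg _)) (by positivity)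
  · intro h2
    have hz : mderivX β (fun p : E n × E n => ⟪p.1, p.2⟫ / ‖p.2‖) = 0 :=
      c2 (by rw [hsum]; exact h2)
    rw [hz]
    rfl
end
end

section
/- Let s > 1 and M > 0. Define λ̃(x,ξ) = -λ₁(x,ξ)χ̃(x,ξ) - λ₂(x,ξ)(1-χ̃(x,ξ)) with χ̃(x,ξ) = χ(2(x·ω)/⟨x⟩), where χ ∈ C_c^∞(ℝ), 0 ≤ χ ≤ 1, tχ'(t) ≤ 0, and λ₁, λ₂ are as in the construction (λᵢ(x,ξ) = ∫₀^{x·ω} gᵢ(x-τω,ξ)dτ with g₁(x)=M⟨x⟩^{-1+1/s}, g₂(x,ξ)=M⟨x·ω⟩^{-1+1/s}). Then for all x ∈ ℝⁿ, ξ ≠ 0: ∑_{j=1}^n (∂_{x_j}λ̃)(x,ξ) ξ_j ≤ -M⟨x⟩^{1/s-1}|ξ|. -/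
open Real MeasureTheory intervalIntegral
open scoped RealInnerProductSpace BigOperators

noncomputable section

lemma contInt (M p c : ℝ) (hc : 0 < c) :
    Continuous (fun u : ℝ => M * (c + u ^ 2) ^ (p/2)) := by
  apply Continuous.mul continuous_const
  apply Continuous.rpow_const (by continuity)
  intro u; left; positivity

lemma hasDerivAt_intFun (f : ℝ → ℝ) (hf : Continuous f) (b : ℝ) :
    HasDerivAt (fun t => ∫ u in (0:ℝ)..t, f u) (f b) b :=
  intervalIntegral.integral_hasDerivAt_right (hf.intervalIntegrable _ _)
    (hf.stronglyMeasurableAtFilter _ _) hf.continuousAt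

lemma sqrt_rpow' (t p : ℝ) (ht : 0 ≤ t) : Real.sqrt t ^ p = t ^ (p/2) := by
  rw [show p/2 = 1/2 * p by ring, Real.rpow_mul ht, Real.sqrt_eq_rpow]

lemma subst_int (M p c b : ℝ) (hc : 0 < c) :
    (∫ σ in (0:ℝ)..b, M * (c + σ ^ 2) ^ (p/2)) =
      c ^ ((p+1)/2) * ∫ u in (0:ℝ)..(b / Real.sqrt c), M * (1 + u ^ 2) ^ (p/2) := by
  set k := Real.sqrt c with hk
  have hk0 : 0 < k := Real.sqrt_pos.mpr hc
  have hk2 : k ^ 2 = c := Real.sq_sqrt hc.le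
  have key : ∀ u : ℝ, M * (c + (k * u) ^ 2) ^ (p/2) = (c ^ (p/2) * M) * (1 + u ^ 2) ^ (p/2) := by
    intro u
    have : c + (k * u) ^ 2 = c * (1 + u ^ 2) := by rw [← hk2]; ring
    rw [this, Real.mul_rpow hc.le (by positivity)]; ring
  have h1 : (k • ∫ u in (0:ℝ)..(b / k), M * (c + (k * u) ^ 2) ^ (p/2))
      = ∫ σ in (k * 0)..(k * (b / k)), M * (c + σ ^ 2) ^ (p/2) :=
    intervalIntegral.smul_integral_comp_mul_left (fun σ => M * (c + σ ^ 2) ^ (p/2)) k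
  rw [mul_zero, mul_div_cancel₀ _ hk0.ne'] at h1
  rw [← h1]
  simp only [key, smul_eq_mul]
  rw [intervalIntegral.integral_const_mul, intervalIntegral.integral_const_mul,
    show c ^ ((p+1)/2) = k * c ^ (p/2) by
      rw [hk, Real.sqrt_eq_rpow, ← Real.rpow_add hc]; congr 1; ring]
  ring

lemma key_simp (p c r : ℝ) (hc : 0 < c) :
    c ^ ((p+1)/2) * ((1 + (r / Real.sqrt c) ^ 2) ^ (p/2)) / Real.sqrt c
      = (c + r ^ 2) ^ (p/2) := by
  set k := Real.sqrt c with hk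
  have hk0 : 0 < k := Real.sqrt_pos.mpr hc
  have hk2 : k ^ 2 = c := Real.sq_sqrt hc.le
  have e : 1 + (r / k) ^ 2 = (c + r ^ 2) / c := by
    rw [div_pow, hk2]; field_simp
  rw [e, Real.div_rpow (by positivity) hc.le,
    show c ^ ((p+1)/2) = k * c ^ (p/2) by
      rw [hk, Real.sqrt_eq_rpow, ← Real.rpow_add hc]; congr 1; ring]
  have h1 : c ^ (p/2) ≠ 0 := by positivity
  field_simp

lemma int_mono (M p c₁ c₂ a b : ℝ) (hM : 0 ≤ M) (hp : p ≤ 0) (h1 : 0 < c₁)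
    (hcc : c₁ ≤ c₂) (hab : a ≤ b) :
    (∫ σ in a..b, M * (c₂ + σ ^ 2) ^ (p/2)) ≤ ∫ σ in a..b, M * (c₁ + σ ^ 2) ^ (p/2) := by
  apply intervalIntegral.integral_mono_on hab
    ((contInt M p c₂ (lt_of_lt_of_le h1 hcc)).intervalIntegrable a b)
    ((contInt M p c₁ h1).intervalIntegrable a b)
  intro σ _
  exact mul_le_mul_of_nonneg_left
    (Real.rpow_le_rpow_of_nonpos (by positivity) (by linarith) (by linarith)) hM

lemma myDivDiff {E' : Type*} [NormedAddCommGroup E'] [NormedSpace ℝ E'] {a b : E' → ℝ}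
    {x : E'} (ha : DifferentiableAt ℝ a x) (hb : DifferentiableAt ℝ b x) (hne : b x ≠ 0) :
    DifferentiableAt ℝ (fun y => a y / b y) x := by
  simp only [div_eq_mul_inv]; exact ha.mul (hb.inv hne)

set_option maxHeartbeats 4000000 in
theorem stmt11 {n : ℕ} (M s h : ℝ) (hM : 0 < M) (hs : 1 < s) (hh : 1 ≤ h)
    (χ : ℝ → ℝ) (hχsm : ContDiff ℝ (⊤ : ℕ∞) χ) (hχc : HasCompactSupport χ)
    (hχ0 : ∀ t, 0 ≤ χ t) (hχ1 : ∀ t, χ t ≤ 1) (hχ' : ∀ t, t * deriv χ t ≤ 0)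
    (lam1 lam2 lamt : E n → E n → ℝ)
    (hlam1 : ∀ x ξ : E n, lam1 x ξ =
      ∫ τ in (0:ℝ)..(⟪x, ‖ξ‖⁻¹ • ξ⟫),
        M * Real.sqrt (h ^ 2 + ‖x - τ • (‖ξ‖⁻¹ • ξ)‖ ^ 2) ^ (-1 + 1 / s))
    (hlam2 : ∀ x ξ : E n, lam2 x ξ =
      ∫ τ in (0:ℝ)..(⟪x, ‖ξ‖⁻¹ • ξ⟫),
        M * Real.sqrt (h ^ 2 + (⟪x - τ • (‖ξ‖⁻¹ • ξ), ‖ξ‖⁻¹ • ξ⟫ : ℝ) ^ 2) ^ (-1 + 1 / s))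
    (hlamt : ∀ x ξ : E n, lamt x ξ =
      -(lam1 x ξ) * χ (2 * ⟪x, ‖ξ‖⁻¹ • ξ⟫ / Real.sqrt (h ^ 2 + ‖x‖ ^ 2))
        - lam2 x ξ * (1 - χ (2 * ⟪x, ‖ξ‖⁻¹ • ξ⟫ / Real.sqrt (h ^ 2 + ‖x‖ ^ 2)))) :
    ∀ (x ξ : E n), ξ ≠ 0 →
      ∑ j : Fin n, fderiv ℝ (fun y => lamt y ξ) x (EuclideanSpace.single j 1) * ξ j
        ≤ -M * Real.sqrt (h ^ 2 + ‖x‖ ^ 2) ^ (1 / s - 1) * ‖ξ‖ := by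
  intro x ξ hξ
  set p : ℝ := -1 + 1 / s with hp
  have hp0 : p < 0 := by
    have h1 : 1 / s < 1 := by
      rw [div_lt_one (by linarith)]; exact hs
    rw [hp]; linarith
  have hh2 : (1:ℝ) ≤ h ^ 2 := by nlinarith
  clear_value p
  set ω : E n := ‖ξ‖⁻¹ • ξ with hω
  have hnξ : (0:ℝ) < ‖ξ‖ := norm_pos_iff.mpr hξ
  set nξ : ℝ := ‖ξ‖ with hnξdef
  have hωω : (⟪ω, ω⟫ : ℝ) = 1 := by
    rw [hω, real_inner_smul_left, real_inner_smul_right, real_inner_self_eq_norm_sq]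
    field_simp
    rw [hnξdef]
  have hω1 : ‖ω‖ = 1 := by
    rw [hω, norm_smul, norm_inv, norm_norm]
    field_simp
  have hξω : (⟪ξ, ω⟫ : ℝ) = nξ := by
    rw [hω, real_inner_smul_right, real_inner_self_eq_norm_sq, hnξdef]
    field_simp
  have hCS : ∀ y : E n, (⟪y, ω⟫ : ℝ) ^ 2 ≤ ‖y‖ ^ 2 := by
    intro y
    have h1 := abs_real_inner_le_norm y ω
    rw [hω1, mul_one] at h1
    calc (⟪y, ω⟫ : ℝ) ^ 2 = |⟪y, ω⟫| ^ 2 := (sq_abs _).symm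
    _ ≤ ‖y‖ ^ 2 := by nlinarith [abs_nonneg (⟪y, ω⟫ : ℝ), norm_nonneg y]
  -- closed forms
  set F0 : ℝ → ℝ := fun t => ∫ u in (0:ℝ)..t, M * (1 + u ^ 2) ^ (p/2) with hF0def
  set F2 : ℝ → ℝ := fun t => ∫ u in (0:ℝ)..t, M * (h ^ 2 + u ^ 2) ^ (p/2) with hF2def
  set Qf : E n → ℝ := fun y => h ^ 2 + (‖y‖ ^ 2 - (⟪y, ω⟫ : ℝ) ^ 2) with hQfdef
  have hQfpos : ∀ y : E n, 0 < Qf y := by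
    intro y
    have := hCS y
    simp only [hQfdef]
    nlinarith
  have hlam2' : ∀ y : E n, lam2 y ξ = F2 ⟪y, ω⟫ := by
    intro y
    have h2 := hlam2 y ξ
    rw [← hω] at h2
    rw [h2]
    have h1 : ∀ τ : ℝ,
        M * Real.sqrt (h ^ 2 + (⟪y - τ • ω, ω⟫ : ℝ) ^ 2) ^ p
        = (fun σ : ℝ => M * (h ^ 2 + σ ^ 2) ^ (p/2)) ((⟪y, ω⟫ : ℝ) - τ) := by
      intro τ
      simp only [inner_sub_left, real_inner_smul_left, hωω, mul_one]
      rw [sqrt_rpow' _ _ (by positivity)]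
    simp only [h1]
    rw [intervalIntegral.integral_comp_sub_left (fun σ : ℝ => M * (h ^ 2 + σ ^ 2) ^ (p/2))
      (⟪y, ω⟫ : ℝ)]
    simp [hF2def]
  have hlam1' : ∀ y : E n, lam1 y ξ =
      Qf y ^ ((p+1)/2) * F0 ((⟪y, ω⟫ : ℝ) / Real.sqrt (Qf y)) := by
    intro y
    have h2 := hlam1 y ξ
    rw [← hω] at h2
    rw [h2]
    have h1 : ∀ τ : ℝ,
        M * Real.sqrt (h ^ 2 + ‖y - τ • ω‖ ^ 2) ^ p
        = (fun σ : ℝ => M * (Qf y + σ ^ 2) ^ (p/2)) ((⟪y, ω⟫ : ℝ) - τ) := by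
      intro τ
      have hns : ‖y - τ • ω‖ ^ 2 = ‖y‖ ^ 2 - 2 * (τ * ⟪y, ω⟫) + τ ^ 2 := by
        rw [norm_sub_sq_real, real_inner_smul_right, norm_smul, hω1, mul_one,
          Real.norm_eq_abs, sq_abs]
      simp only
      rw [hns, sqrt_rpow' _ _ (by nlinarith [hCS y])]
      congr 2
      simp only [hQfdef]
      ring
    simp only [h1]
    rw [intervalIntegral.integral_comp_sub_left (fun σ : ℝ => M * (Qf y + σ ^ 2) ^ (p/2))
      (⟪y, ω⟫ : ℝ)]
    simp only [sub_self, sub_zero]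
    rw [subst_int M p (Qf y) _ (hQfpos y)]
  -- abbreviations at the point x
  set r : ℝ := (⟪x, ω⟫ : ℝ) with hr
  set A : ℝ := ‖x‖ ^ 2 with hA
  set c : ℝ := Qf x with hcdef
  have hc0 : 0 < c := by rw [hcdef]; exact hQfpos x
  set k : ℝ := Real.sqrt c with hk
  have hk0 : 0 < k := by rw [hk]; exact Real.sqrt_pos.mpr hc0
  set N : ℝ := Real.sqrt (h ^ 2 + A) with hN
  have hApos : (0:ℝ) < h ^ 2 + A := by
    have h9 : (0:ℝ) ≤ A := by rw [hA]; positivity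
    linarith only [h9, hh2]
  have hNpos : 0 < N := by rw [hN]; exact Real.sqrt_pos.mpr hApos
  have hN2 : N ^ 2 = h ^ 2 + A := by rw [hN]; exact Real.sq_sqrt hApos.le
  set θ0 : ℝ := 2 * r / N with hθ0
  set dχ : ℝ := deriv χ θ0 with hdχ
  have hrA : r ^ 2 ≤ A := by
    have := hCS x
    rw [← hr, ← hA] at this
    exact this
  have hc2 : c = h ^ 2 + (A - r ^ 2) := by
    rw [hcdef, hQfdef]
  clear_value ω nξ F0 F2 Qf r A c k N θ0 dχ
  -- closed form of the full function
  have hfeq : (fun y => lamt y ξ) = fun y =>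
      -(Qf y ^ ((p+1)/2) * F0 ((⟪y, ω⟫ : ℝ) / Real.sqrt (Qf y))) *
        χ (2 * (⟪y, ω⟫ : ℝ) / Real.sqrt (h ^ 2 + ‖y‖ ^ 2))
      - F2 (⟪y, ω⟫ : ℝ) * (1 - χ (2 * (⟪y, ω⟫ : ℝ) / Real.sqrt (h ^ 2 + ‖y‖ ^ 2))) := by
    funext y
    have h3 := hlamt y ξ
    rw [← hnξdef, ← hω] at h3
    rw [h3, hlam1' y, hlam2' y]
  -- derivative facts for F0, F2
  have hF0der : ∀ b : ℝ, HasDerivAt F0 (M * (1 + b ^ 2) ^ (p/2)) b := by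
    intro b; rw [hF0def]; exact hasDerivAt_intFun _ (contInt M p 1 one_pos) b
  have hF2der : ∀ b : ℝ, HasDerivAt F2 (M * (h ^ 2 + b ^ 2) ^ (p/2)) b := by
    intro b; rw [hF2def]; exact hasDerivAt_intFun _ (contInt M p (h ^ 2) (by positivity)) b
  have hχdiff : Differentiable ℝ χ := hχsm.differentiable (by simp)
  -- differentiability of the full function at x
  have dInner : DifferentiableAt ℝ (fun y : E n => (⟪y, ω⟫ : ℝ)) x :=
    differentiableAt_id.inner ℝ (differentiableAt_const ω)
  have dQf : DifferentiableAt ℝ Qf x := by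
    rw [hQfdef]
    exact (differentiableAt_const _).add ((differentiableAt_id.norm_sq ℝ).sub (dInner.pow 2))
  have dsqQf : DifferentiableAt ℝ (fun y => Real.sqrt (Qf y)) x := dQf.sqrt (hQfpos x).ne'
  have hsqQfpos : 0 < Real.sqrt (Qf x) := Real.sqrt_pos.mpr (hQfpos x)
  have ddiv : DifferentiableAt ℝ (fun y => (⟪y, ω⟫ : ℝ) / Real.sqrt (Qf y)) x :=
    myDivDiff dInner dsqQf hsqQfpos.ne'
  have dF0c : DifferentiableAt ℝ (fun y => F0 ((⟪y, ω⟫ : ℝ) / Real.sqrt (Qf y))) x :=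
    (hF0der _).differentiableAt.comp x ddiv
  have dPhi1 : DifferentiableAt ℝ
      (fun y => Qf y ^ ((p+1)/2) * F0 ((⟪y, ω⟫ : ℝ) / Real.sqrt (Qf y))) x :=
    (dQf.rpow_const (Or.inl (hQfpos x).ne')).mul dF0c
  have dNy : DifferentiableAt ℝ (fun y : E n => Real.sqrt (h ^ 2 + ‖y‖ ^ 2)) x := by
    apply DifferentiableAt.sqrt
    · exact (differentiableAt_const _).add (differentiableAt_id.norm_sq ℝ)
    · rw [← hA]; exact hApos.ne'
  have dθ : DifferentiableAt ℝ
      (fun y : E n => 2 * (⟪y, ω⟫ : ℝ) / Real.sqrt (h ^ 2 + ‖y‖ ^ 2)) x := by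
    apply myDivDiff (dInner.const_mul 2) dNy
    rw [← hA, ← hN]
    exact hNpos.ne'
  have dχθ : DifferentiableAt ℝ
      (fun y : E n => χ (2 * (⟪y, ω⟫ : ℝ) / Real.sqrt (h ^ 2 + ‖y‖ ^ 2))) x :=
    (hχdiff _).comp x dθ
  have dF2c : DifferentiableAt ℝ (fun y => F2 (⟪y, ω⟫ : ℝ)) x :=
    (hF2der _).differentiableAt.comp x dInner
  have hdiff : DifferentiableAt ℝ (fun y => lamt y ξ) x := by
    rw [hfeq]
    exact (dPhi1.neg.mul dχθ).sub (dF2c.mul ((differentiableAt_const 1).sub dχθ))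
  -- restriction to the line
  have hlinemap : HasDerivAt (fun t : ℝ => x + t • ξ) ξ 0 := by
    simpa using ((hasDerivAt_id (0:ℝ)).smul_const ξ).const_add x
  have hline : HasDerivAt (fun t : ℝ => lamt (x + t • ξ) ξ)
      (fderiv ℝ (fun y => lamt y ξ) x ξ) 0 := by
    have hF : HasFDerivAt (fun y => lamt y ξ) (fderiv ℝ (fun y => lamt y ξ) x)
        (x + (0:ℝ) • ξ) := by
      rw [show x + (0:ℝ) • ξ = x by simp]
      exact hdiff.hasFDerivAt
    exact hF.comp_hasDerivAt 0 hlinemap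
  have hxξ : (⟪x, ξ⟫ : ℝ) = nξ * r := by
    rw [hr, hω, real_inner_smul_right]
    field_simp [hnξ.ne']
  have hgeq : (fun t : ℝ => lamt (x + t • ξ) ξ) = fun t : ℝ =>
      -(c ^ ((p+1)/2) * F0 ((r + t * nξ) / k)) *
        χ (2 * (r + t * nξ) / Real.sqrt (h ^ 2 + (A + 2*t*(nξ*r) + t^2*nξ^2)))
      - F2 (r + t * nξ) *
        (1 - χ (2 * (r + t * nξ) / Real.sqrt (h ^ 2 + (A + 2*t*(nξ*r) + t^2*nξ^2)))) := by
    funext t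
    have e1 : (⟪x + t • ξ, ω⟫ : ℝ) = r + t * nξ := by
      rw [inner_add_left, real_inner_smul_left, hξω, hr]
    have e2 : ‖x + t • ξ‖ ^ 2 = A + 2*t*(nξ*r) + t^2*nξ^2 := by
      rw [norm_add_sq_real, real_inner_smul_right, hxξ, norm_smul, Real.norm_eq_abs,
        ← hnξdef, hA, mul_pow, sq_abs]
      ring
    have e3 : Qf (x + t • ξ) = c := by
      have e4 : Qf (x + t • ξ) = h ^ 2 + (‖x + t • ξ‖ ^ 2 - (⟪x + t • ξ, ω⟫ : ℝ) ^ 2) := by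
        simp only [hQfdef]
      rw [e4, e1, e2, hc2]
      ring
    have h4 := congrFun hfeq (x + t • ξ)
    rw [h4, e3, e1, e2, ← hk]
  -- one-variable derivative computation
  have hu : HasDerivAt (fun t : ℝ => r + t * nξ) nξ 0 := by
    simpa using ((hasDerivAt_id (0:ℝ)).mul_const nξ).const_add r
  have hw : HasDerivAt (fun t : ℝ => h ^ 2 + (A + 2*t*(nξ*r) + t^2*nξ^2)) (2*(nξ*r)) 0 := by
    have h1 : (fun t : ℝ => h ^ 2 + (A + 2*t*(nξ*r) + t^2*nξ^2))
        = fun t : ℝ => (2*(nξ*r)) * t + nξ^2 * t^2 + (h^2 + A) := by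
      funext t; ring
    rw [h1]
    have h2 : HasDerivAt (fun t : ℝ => (2*(nξ*r)) * t + nξ^2 * t^2) (2*(nξ*r)) 0 := by
      simpa using ((hasDerivAt_id (0:ℝ)).const_mul (2*(nξ*r))).fun_add
        ((hasDerivAt_pow 2 (0:ℝ)).const_mul (nξ^2))
    exact h2.add_const _
  have hsq : HasDerivAt (fun t : ℝ => Real.sqrt (h ^ 2 + (A + 2*t*(nξ*r) + t^2*nξ^2)))
      (nξ*r/N) 0 := by
    have hs1 : HasDerivAt Real.sqrt (1/(2*N))
        (h ^ 2 + (A + 2*(0:ℝ)*(nξ*r) + (0:ℝ)^2*nξ^2)) := by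
      rw [show h ^ 2 + (A + 2*(0:ℝ)*(nξ*r) + (0:ℝ)^2*nξ^2) = h^2 + A by ring]
      have := Real.hasDerivAt_sqrt hApos.ne'
      rwa [← hN] at this
    have h2 : HasDerivAt (fun t : ℝ => Real.sqrt (h ^ 2 + (A + 2*t*(nξ*r) + t^2*nξ^2)))
        (1/(2*N) * (2*(nξ*r))) 0 := hs1.comp 0 hw
    convert h2 using 1
    field_simp
  have hθder : HasDerivAt
      (fun t : ℝ => 2 * (r + t * nξ) / Real.sqrt (h ^ 2 + (A + 2*t*(nξ*r) + t^2*nξ^2)))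
      (2*nξ/N*(1 - r^2/N^2)) 0 := by
    have hnum : HasDerivAt (fun t : ℝ => 2 * (r + t * nξ)) (2*nξ) 0 := by
      simpa using hu.const_mul 2
    have hden0 : Real.sqrt (h ^ 2 + (A + 2*(0:ℝ)*(nξ*r) + (0:ℝ)^2*nξ^2)) = N := by
      rw [show h ^ 2 + (A + 2*(0:ℝ)*(nξ*r) + (0:ℝ)^2*nξ^2) = h^2+A by ring, hN]
    have h2 := hnum.fun_div hsq (by beta_reduce; rw [hden0]; exact hNpos.ne')
    convert h2 using 1
    case e'_4 => rfl
    case e'_5 => rfl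
    beta_reduce
    rw [hden0]
    field_simp [hNpos.ne']
    ring
  have hθ0v : 2*(r+(0:ℝ)*nξ)/Real.sqrt (h^2+(A+2*(0:ℝ)*(nξ*r)+(0:ℝ)^2*nξ^2)) = θ0 := by
    rw [show h ^ 2 + (A + 2*(0:ℝ)*(nξ*r) + (0:ℝ)^2*nξ^2) = h^2+A by ring, ← hN, hθ0]
    norm_num
  have hχθ : HasDerivAt
      (fun t : ℝ => χ (2 * (r + t * nξ) / Real.sqrt (h ^ 2 + (A + 2*t*(nξ*r) + t^2*nξ^2))))
      (dχ * (2*nξ/N*(1 - r^2/N^2))) 0 := by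
    have hχat : HasDerivAt χ dχ
        (2*(r+(0:ℝ)*nξ)/Real.sqrt (h^2+(A+2*(0:ℝ)*(nξ*r)+(0:ℝ)^2*nξ^2))) := by
      rw [hθ0v, hdχ]
      exact (hχdiff θ0).hasDerivAt
    exact hχat.comp 0 hθder
  have hF0u : HasDerivAt (fun t : ℝ => F0 ((r + t * nξ) / k))
      (M * (1 + (r/k)^2) ^ (p/2) * (nξ/k)) 0 := by
    have h1 : HasDerivAt (fun t : ℝ => (r + t * nξ) / k) (nξ/k) 0 := hu.div_const k
    have h2 : HasDerivAt F0 (M * (1 + (r/k)^2) ^ (p/2)) ((r + (0:ℝ) * nξ) / k) := by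
      rw [show (r + (0:ℝ)*nξ)/k = r/k by ring]
      exact hF0der (r/k)
    exact h2.comp 0 h1
  have hΦ1 : HasDerivAt (fun t : ℝ => c ^ ((p+1)/2) * F0 ((r + t * nξ) / k))
      (c ^ ((p+1)/2) * (M * (1 + (r/k)^2) ^ (p/2) * (nξ/k))) 0 := hF0u.const_mul _
  have hF2u : HasDerivAt (fun t : ℝ => F2 (r + t * nξ)) (M * (h^2 + r^2) ^ (p/2) * nξ) 0 := by
    have h2 : HasDerivAt F2 (M * (h^2 + r^2) ^ (p/2)) (r + (0:ℝ) * nξ) := by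
      rw [show r + (0:ℝ)*nξ = r by ring]
      exact hF2der r
    exact h2.comp 0 hu
  have hG2 : HasDerivAt (fun t : ℝ =>
      -(c ^ ((p+1)/2) * F0 ((r + t * nξ) / k)) *
        χ (2 * (r + t * nξ) / Real.sqrt (h ^ 2 + (A + 2*t*(nξ*r) + t^2*nξ^2)))
      - F2 (r + t * nξ) *
        (1 - χ (2 * (r + t * nξ) / Real.sqrt (h ^ 2 + (A + 2*t*(nξ*r) + t^2*nξ^2)))))
      (-(c ^ ((p+1)/2) * (M * (1 + (r/k)^2) ^ (p/2) * (nξ/k))) * χ θ0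
        + (-(c ^ ((p+1)/2) * F0 (r/k))) * (dχ * (2*nξ/N*(1 - r^2/N^2)))
        - ((M * (h^2 + r^2) ^ (p/2) * nξ) * (1 - χ θ0)
          + F2 r * (-(dχ * (2*nξ/N*(1 - r^2/N^2)))))) 0 := by
    convert (hΦ1.fun_neg.fun_mul hχθ).fun_sub (hF2u.fun_mul (hχθ.const_sub 1)) using 1
    case e'_4 => rfl
    case e'_5 => rfl
    beta_reduce
    rw [hθ0v, show r + (0:ℝ)*nξ = r by ring]
  have hDval : fderiv ℝ (fun y => lamt y ξ) x ξ =
      -(c ^ ((p+1)/2) * (M * (1 + (r/k)^2) ^ (p/2) * (nξ/k))) * χ θ0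
        + (-(c ^ ((p+1)/2) * F0 (r/k))) * (dχ * (2*nξ/N*(1 - r^2/N^2)))
        - ((M * (h^2 + r^2) ^ (p/2) * nξ) * (1 - χ θ0)
          + F2 r * (-(dχ * (2*nξ/N*(1 - r^2/N^2))))) := by
    apply hline.unique
    rw [hgeq]
    exact hG2
  -- sum over coordinates equals evaluation at ξ
  have hdecomp : ∑ j : Fin n, ξ j • (EuclideanSpace.single j (1:ℝ)) = ξ := by
    ext i
    rw [show (∑ j : Fin n, ξ j • (EuclideanSpace.single j (1:ℝ))) i
        = ∑ j : Fin n, (ξ j • (EuclideanSpace.single j (1:ℝ))) i from by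
      rw [WithLp.ofLp_sum]; exact Finset.sum_apply i Finset.univ _]
    simp [EuclideanSpace.single_apply]
  have hsum : ∑ j : Fin n, fderiv ℝ (fun y => lamt y ξ) x (EuclideanSpace.single j 1) * ξ j
      = fderiv ℝ (fun y => lamt y ξ) x ξ := by
    have h9 : (fderiv ℝ (fun y => lamt y ξ) x) ξ
        = (fderiv ℝ (fun y => lamt y ξ) x) (∑ j : Fin n, ξ j • EuclideanSpace.single j 1) := by
      rw [hdecomp]
    rw [h9, map_sum]
    apply Finset.sum_congr rfl
    intro j _
    rw [ContinuousLinearMap.map_smul, smul_eq_mul, mul_comm]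
  -- final inequality
  have hpe : (1:ℝ)/s - 1 = p := by rw [hp]; ring
  have hNp : Real.sqrt (h^2+A) ^ ((1:ℝ)/s - 1) = (h^2+A) ^ (p/2) := by
    rw [hpe, sqrt_rpow' _ _ hApos.le]
  have hg1 : c ^ ((p+1)/2) * (M * (1 + (r/k)^2) ^ (p/2) * (nξ/k)) = M * (h^2+A) ^ (p/2) * nξ := by
    have h1 := key_simp p c r hc0
    rw [← hk] at h1
    rw [show c + r^2 = h^2+A by rw [hc2]; ring] at h1
    calc c ^ ((p+1)/2) * (M * (1 + (r/k)^2) ^ (p/2) * (nξ/k))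
        = (c ^ ((p+1)/2) * ((1 + (r/k)^2) ^ (p/2)) / k) * (M * nξ) := by ring
      _ = (h^2+A) ^ (p/2) * (M*nξ) := by rw [h1]
      _ = M * (h^2+A) ^ (p/2) * nξ := by ring
  have hg12 : M * (h^2+A) ^ (p/2) ≤ M * (h^2+r^2) ^ (p/2) := by
    apply mul_le_mul_of_nonneg_left _ hM.le
    exact Real.rpow_le_rpow_of_nonpos (by linarith only [hh2, sq_nonneg r])
      (by linarith only [hrA]) (by linarith only [hp0])
  have hDθnn : 0 ≤ 2*nξ/N*(1 - r^2/N^2) := by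
    apply mul_nonneg (div_nonneg (by linarith) hNpos.le)
    have h5 : r^2/N^2 ≤ 1 := by
      rw [div_le_one (pow_pos hNpos 2)]
      linarith only [hN2, hrA, hh2]
    linarith only [h5]
  have hlam1i : c ^ ((p+1)/2) * F0 (r/k) = ∫ σ in (0:ℝ)..r, M * (c + σ^2) ^ (p/2) := by
    rw [subst_int M p c r hc0, ← hk]
    simp only [hF0def]
  have hlam2i : F2 r = ∫ σ in (0:ℝ)..r, M * (h^2 + σ^2) ^ (p/2) := by simp only [hF2def]
  have hh2c : h^2 ≤ c := by rw [hc2]; linarith only [hrA]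
  have hsign : 0 ≤ (c ^ ((p+1)/2) * F0 (r/k) - F2 r) * dχ := by
    rcases lt_trichotomy r 0 with hrc | hrc | hrc
    · have hθneg : θ0 < 0 := by
        rw [hθ0]
        apply div_neg_of_neg_of_pos (by linarith) hNpos
      have hdχnn : 0 ≤ dχ := by
        have h5 : θ0 * dχ ≤ 0 := by rw [hdχ]; exact hχ' θ0
        by_contra hcon
        push_neg at hcon
        linarith only [h5, mul_pos_of_neg_of_neg hθneg hcon]
      apply mul_nonneg _ hdχnn
      rw [hlam1i, hlam2i, intervalIntegral.integral_symm r 0, intervalIntegral.integral_symm r 0]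
      have h6 := int_mono M p (h^2) c r 0 hM.le (by linarith only [hp0])
        (by linarith only [hh2]) hh2c hrc.le
      linarith only [h6]
    · rw [hrc]
      simp only [hF0def, hF2def, zero_div]
      rw [intervalIntegral.integral_same, intervalIntegral.integral_same]
      simp
    · have hθpos : 0 < θ0 := by
        rw [hθ0]; exact div_pos (by linarith) hNpos
      have hdχnp : dχ ≤ 0 := by
        have h5 : θ0 * dχ ≤ 0 := by rw [hdχ]; exact hχ' θ0
        by_contra hcon
        push_neg at hcon
        linarith only [h5, mul_pos hθpos hcon]
      have h6 := int_mono M p (h^2) c 0 r hM.le (by linarith only [hp0])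
        (by linarith only [hh2]) hh2c hrc.le
      have h7 : c ^ ((p+1)/2) * F0 (r/k) - F2 r ≤ 0 := by
        rw [hlam1i, hlam2i]
        linarith only [h6]
      linarith only [mul_nonneg (neg_nonneg.mpr h7) (neg_nonneg.mpr hdχnp)]
  have hNp' : N ^ ((1:ℝ)/s - 1) = (h^2+A) ^ (p/2) := by rw [hN]; exact hNp
  rw [hsum, hDval, hg1, hNp']
  linarith only [mul_nonneg hsign hDθnn,
    mul_nonneg (mul_nonneg (sub_nonneg.mpr hg12) (sub_nonneg.mpr (hχ1 θ0))) hnξ.le]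
end
end

section
/- Fix κ > 1 and ζ > 0 and define m_{κ,ζ}(x) = ∑_{j=0}^∞ ζ^j ⟨x⟩^{2j} / (j!)^{2κ} for x ∈ ℝⁿ (⟨x⟩ = (1+|x|²)^{1/2}). Then for every ε > 0 there exists C = C(κ,ε) > 0 such that C^{-1} exp((2κ-ε) ζ^{1/(2κ)} ⟨x⟩^{1/κ}) ≤ m_{κ,ζ}(x) ≤ C exp((2κ+ε) ζ^{1/(2κ)} ⟨x⟩^{1/κ}) for all x ∈ ℝⁿ. -/
open Real
open scoped BigOperators

noncomputable section

theorem stmt12 {n : ℕ} (κ ζ : ℝ) (hκ : 1 < κ) (hζ : 0 < ζ)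
    (m : E n → ℝ)
    (hm : ∀ x : E n, m x =
      ∑' j : ℕ, ζ ^ j * Real.sqrt (1 + ‖x‖ ^ 2) ^ (2 * j) / (Nat.factorial j : ℝ) ^ (2 * κ)) :
    ∀ ε > 0, ∃ C > 0, ∀ x : E n,
      C⁻¹ * Real.exp ((2 * κ - ε) * ζ ^ (1 / (2 * κ)) * Real.sqrt (1 + ‖x‖ ^ 2) ^ (1 / κ))
          ≤ m x
      ∧ m x ≤
        C * Real.exp ((2 * κ + ε) * ζ ^ (1 / (2 * κ)) * Real.sqrt (1 + ‖x‖ ^ 2) ^ (1 / κ)) := by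
  intro ε hε
  have hκ0 : (0:ℝ) < κ := by linarith
  have hκne : κ ≠ 0 := hκ0.ne'
  set p : ℝ := 2 * κ with hp_def
  have hp1 : 1 < p := by rw [hp_def]; nlinarith
  have hp0 : 0 < p := by linarith
  set q : ℝ := p / (p - 1) with hq_def
  have hpq : p.HolderConjugate q := Real.HolderConjugate.conjExponent hp1
  have hq0 : 0 < q := hpq.symm.pos
  set ε' : ℝ := min ε κ with hε'_def
  have hε'0 : 0 < ε' := lt_min hε hκ0
  have hε'κ : ε' ≤ κ := min_le_right _ _
  have hε'ε : ε' ≤ ε := min_le_left _ _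
  set r : ℝ := 1 - ε' / p with hr_def
  have hr0 : 0 < r := by
    have h1 : ε' / p < 1 := by
      rw [div_lt_one hp0]
      have : κ < p := by rw [hp_def]; nlinarith
      linarith
    rw [hr_def]; linarith
  have hr1 : r < 1 := by
    have : 0 < ε' / p := div_pos hε'0 hp0
    rw [hr_def]; linarith
  have hrq1 : r ^ q < 1 := Real.rpow_lt_one hr0.le hr1 hq0
  have hrq0 : (0:ℝ) < r ^ q := Real.rpow_pos_of_pos hr0 q
  have hs0 : (0:ℝ) < 1 - r ^ q := by linarith
  set c : ℝ := (1 - r ^ q) ^ (p / q) with hc_def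
  have hc0 : 0 < c := Real.rpow_pos_of_pos hs0 _
  have hC0 : (0:ℝ) < c⁻¹ + 1 := by positivity
  -- the exponential series
  have hexp : ∀ v : ℝ, ∑' j : ℕ, v ^ j / (Nat.factorial j : ℝ) = Real.exp v := by
    intro v
    rw [Real.exp_eq_exp_ℝ, NormedSpace.exp_eq_tsum_div]
  refine ⟨c⁻¹ + 1, hC0, fun x => ?_⟩
  set t : ℝ := Real.sqrt (1 + ‖x‖ ^ 2) with ht_def
  have ht1 : 1 ≤ t := by
    rw [ht_def]
    have h := Real.sqrt_le_sqrt (show (1:ℝ) ≤ 1 + ‖x‖ ^ 2 by nlinarith [sq_nonneg ‖x‖])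
    rwa [Real.sqrt_one] at h
  have ht0 : (0:ℝ) < t := lt_of_lt_of_le one_pos ht1
  set u : ℝ := ζ ^ (1 / p) * t ^ (1 / κ) with hu_def
  have hu0 : 0 < u :=
    mul_pos (Real.rpow_pos_of_pos hζ _) (Real.rpow_pos_of_pos ht0 _)
  set a : ℕ → ℝ := fun j => u ^ j / (Nat.factorial j : ℝ) with ha_def
  have ha0 : ∀ j, 0 < a j := fun j => by
    have := Nat.factorial_pos j
    simp only [ha_def]
    positivity
  -- key identity : u ^ p = ζ * t ^ 2
  have hup : u ^ p = ζ * t ^ 2 := by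
    rw [hu_def, Real.mul_rpow (Real.rpow_pos_of_pos hζ _).le (Real.rpow_pos_of_pos ht0 _).le,
      ← Real.rpow_mul hζ.le, ← Real.rpow_mul ht0.le,
      one_div_mul_cancel hp0.ne', Real.rpow_one,
      show 1 / κ * p = 2 by rw [hp_def]; field_simp]
    rw [show (2:ℝ) = ((2:ℕ):ℝ) by norm_num, Real.rpow_natCast]
  have hkey : ∀ j : ℕ, ζ ^ j * t ^ (2 * j) / (Nat.factorial j : ℝ) ^ p = a j ^ p := by
    intro j
    have hupj : (u ^ j) ^ p = (u ^ p) ^ j := by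
      rw [← Real.rpow_natCast u j, ← Real.rpow_mul hu0.le, mul_comm ((j:ℝ)) p,
        Real.rpow_mul hu0.le, Real.rpow_natCast]
    simp only [ha_def]
    rw [Real.div_rpow (by positivity) (by positivity), hupj, hup, mul_pow, ← pow_mul]
  have hmx : m x = ∑' j, a j ^ p := by
    rw [hm x, ← ht_def]
    exact tsum_congr fun j => hkey j
  -- summability
  have hsa : Summable a := Real.summable_pow_div_factorial u
  have htsuma : ∑' k, a k = Real.exp u := hexp u
  have ha_le : ∀ j, a j ≤ Real.exp u := by
    intro j
    have h := Summable.le_tsum hsa j fun k _ => (ha0 k).le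
    rwa [htsuma] at h
  have hbound : ∀ j, a j ^ p ≤ Real.exp u ^ (p - 1) * a j := by
    intro j
    have h1 : a j ^ p = a j ^ (p - 1) * a j := by
      have h2 := Real.rpow_add (ha0 j) (p - 1) 1
      rw [show p - 1 + 1 = p from by ring, Real.rpow_one] at h2
      exact h2
    rw [h1]
    exact mul_le_mul_of_nonneg_right
      (Real.rpow_le_rpow (ha0 j).le (ha_le j) (by linarith)) (ha0 j).le
  have hsp : Summable fun j => a j ^ p :=
    Summable.of_nonneg_of_le (fun j => (Real.rpow_pos_of_pos (ha0 j) p).le)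
      hbound (hsa.mul_left _)
  -- upper bound
  have hupper : m x ≤ Real.exp (p * u) := by
    rw [hmx]
    calc ∑' j, a j ^ p ≤ ∑' j, Real.exp u ^ (p - 1) * a j :=
          Summable.tsum_le_tsum hbound hsp (hsa.mul_left _)
      _ = Real.exp u ^ (p - 1) * ∑' j, a j := tsum_mul_left
      _ = Real.exp (p * u) := by
          rw [htsuma, ← Real.exp_mul, ← Real.exp_add]
          ring_nf
  -- lower bound via Hölder
  have hgq : ∀ j : ℕ, ((r ^ j : ℝ)) ^ q = (r ^ q) ^ j := by
    intro j
    rw [← Real.rpow_natCast r j, ← Real.rpow_mul hr0.le, mul_comm ((j:ℝ)) q,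
      Real.rpow_mul hr0.le, Real.rpow_natCast]
  have hgsum : Summable fun j : ℕ => ((r ^ j : ℝ)) ^ q :=
    Summable.congr (summable_geometric_of_lt_one hrq0.le hrq1) fun j => (hgq j).symm
  have H := Real.inner_le_Lp_mul_Lq_tsum_of_nonneg (f := a) (g := fun j => r ^ j)
    hpq (fun j => (ha0 j).le) (fun j => pow_nonneg hr0.le j) hsp hgsum
  have hlhs : ∑' j, a j * r ^ j = Real.exp (u * r) := by
    rw [← hexp (u * r)]
    refine tsum_congr fun j => ?_
    simp only [ha_def, mul_pow]
    ring
  have hrhs2 : ∑' j : ℕ, ((r ^ j : ℝ)) ^ q = (1 - r ^ q)⁻¹ := by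
    rw [tsum_congr hgq, tsum_geometric_of_lt_one hrq0.le hrq1]
  rw [hlhs, hrhs2, ← hmx] at H
  have hM1 : (1:ℝ) ≤ m x := by
    have h0 : a 0 ^ p ≤ ∑' j, a j ^ p :=
      Summable.le_tsum hsp 0 fun k _ => (Real.rpow_pos_of_pos (ha0 k) p).le
    rw [← hmx] at h0
    have ha00 : a 0 = 1 := by simp [ha_def]
    rwa [ha00, Real.one_rpow] at h0
  have hM0 : (0:ℝ) < m x := lt_of_lt_of_le one_pos hM1
  have H2 : Real.exp (u * r * p) ≤ m x * c⁻¹ := by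
    have h3 := Real.rpow_le_rpow (Real.exp_pos (u * r)).le H hp0.le
    rw [Real.mul_rpow (Real.rpow_nonneg hM0.le _) (Real.rpow_nonneg (inv_nonneg.mpr hs0.le) _),
      ← Real.rpow_mul hM0.le, ← Real.rpow_mul (inv_nonneg.mpr hs0.le),
      one_div_mul_cancel hp0.ne', Real.rpow_one,
      Real.inv_rpow hs0.le, ← Real.exp_mul,
      show 1 / q * p = p / q from by ring, ← hc_def] at h3
    exact h3
  have hlower : c * Real.exp (u * r * p) ≤ m x := by
    calc c * Real.exp (u * r * p) ≤ c * (m x * c⁻¹) :=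
          mul_le_mul_of_nonneg_left H2 hc0.le
      _ = m x := by field_simp
  have hrp : r * p = p - ε' := by rw [hr_def]; field_simp
  constructor
  · -- lower bound
    have e1 : (p - ε) * ζ ^ (1 / p) * t ^ (1 / κ) = (p - ε) * u := by
      rw [hu_def]; ring
    rw [e1]
    have hcC : (c⁻¹ + 1)⁻¹ ≤ c := by
      have h4 : (c⁻¹ + 1)⁻¹ ≤ (c⁻¹)⁻¹ := by
        apply inv_anti₀ (by positivity)
        linarith
      rwa [inv_inv] at h4
    have hee : Real.exp ((p - ε) * u) ≤ Real.exp (u * r * p) := by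
      apply Real.exp_le_exp.mpr
      rw [mul_assoc, hrp, mul_comm u (p - ε')]
      exact mul_le_mul_of_nonneg_right (by linarith) hu0.le
    calc (c⁻¹ + 1)⁻¹ * Real.exp ((p - ε) * u)
        ≤ c * Real.exp (u * r * p) :=
          mul_le_mul hcC hee (Real.exp_pos _).le hc0.le
      _ ≤ m x := hlower
  · -- upper bound
    have e3 : (p + ε) * ζ ^ (1 / p) * t ^ (1 / κ) = (p + ε) * u := by
      rw [hu_def]; ring
    rw [e3]
    calc m x ≤ Real.exp (p * u) := hupper
      _ ≤ Real.exp ((p + ε) * u) := Real.exp_le_exp.mpr (mul_le_mul_of_nonneg_right (by linarith) hu0.le)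
      _ ≤ (c⁻¹ + 1) * Real.exp ((p + ε) * u) :=
          le_mul_of_one_le_left (Real.exp_pos _).le
            (le_add_of_nonneg_left (inv_nonneg.mpr hc0.le))
end
end

section
/- Let μ, ν > 1, s > μ+ν-1, and suppose a ∈ C^∞(ℝ^{2n}) satisfies for all multi-indices α, β, all N ∈ ℕ, and all (x,ξ) with ⟨ξ⟩⟨x⟩ ≥ BN^{μ+ν-1}: |∂_ξ^α∂_x^β a(x,ξ)| ≤ C A^{|α|+|β|+2N} (α!)^μ(β!)^ν (N!)^{μ+ν-1} ⟨ξ⟩^{-|α|-N}⟨x⟩^{-|β|-N} e^{c|x|^{1/s}} (constants A, B, C, c > 0 independent of α,β,N). Then there exist constants C', A', τ > 0 such that |∂_ξ^α∂_x^β a(x,ξ)| ≤ C' (A')^{|α|+|β|}(α!)^μ(β!)^ν exp(-(τ/2)(|x|^{1/(μ+ν-1)} + |ξ|^{1/(μ+ν-1)})) for all α, β and all (x,ξ) ∈ ℝ^{2n}. -/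
open Real
open scoped BigOperators

noncomputable section

/-- Multi-index factorial `γ! = γ₁!⋯γₙ!`. -/
def mfact {n : ℕ} (γ : Fin n → ℕ) : ℕ := ∏ i, Nat.factorial (γ i)

set_option maxHeartbeats 4000000 in
theorem stmt18 {n : ℕ} (μ ν s A B C c : ℝ) (hμ : 1 < μ) (hν : 1 < ν)
    (hs : μ + ν - 1 < s) (hA : 0 < A) (hB : 0 < B) (hC : 0 < C) (hc : 0 < c)
    (a : E n × E n → ℝ)
    (ha : ∀ (α β : Fin n → ℕ) (N : ℕ) (x ξ : E n),
      B * (N : ℝ) ^ (μ + ν - 1) ≤ Real.sqrt (1 + ‖ξ‖ ^ 2) * Real.sqrt (1 + ‖x‖ ^ 2) →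
      |mderivXi α (mderivX β a) (x, ξ)| ≤
        C * A ^ (∑ i, α i + ∑ i, β i + 2 * N) * (mfact α : ℝ) ^ μ * (mfact β : ℝ) ^ ν *
          (Nat.factorial N : ℝ) ^ (μ + ν - 1) *
          Real.sqrt (1 + ‖ξ‖ ^ 2) ^ (-((∑ i, α i : ℝ) + N)) *
          Real.sqrt (1 + ‖x‖ ^ 2) ^ (-((∑ i, β i : ℝ) + N)) *
          Real.exp (c * ‖x‖ ^ (1 / s))) :
    ∃ C' A' τ : ℝ, 0 < C' ∧ 0 < A' ∧ 0 < τ ∧ ∀ (α β : Fin n → ℕ) (x ξ : E n),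
      |mderivXi α (mderivX β a) (x, ξ)| ≤
        C' * A' ^ (∑ i, α i + ∑ i, β i) * (mfact α : ℝ) ^ μ * (mfact β : ℝ) ^ ν *
          Real.exp (-(τ / 2) *
            (‖x‖ ^ (1 / (μ + ν - 1)) + ‖ξ‖ ^ (1 / (μ + ν - 1)))) := by
  have hσ1 : 1 < μ + ν - 1 := by linarith
  set σ := μ + ν - 1 with hσdef
  have hσ0 : 0 < σ := by linarith
  have hs0 : 0 < s := by linarith
  set B₂ := max B (Real.exp 1 * A ^ 2) with hB₂def
  have hB₂B : B ≤ B₂ := le_max_left _ _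
  have hB₂A : Real.exp 1 * A ^ 2 ≤ B₂ := le_max_right _ _
  have hB₂0 : 0 < B₂ := lt_of_lt_of_le (by positivity) hB₂A
  set τ₀ := (B₂ ^ (1 / σ))⁻¹ with hτ₀def
  have hτ₀0 : 0 < τ₀ := by positivity
  obtain ⟨K, hK⟩ : ∃ K : ℝ, ∀ r : ℝ, 0 ≤ r →
      c * r ^ (1 / s) ≤ τ₀ / 2 * r ^ (1 / σ) + K := by
    have he' : 0 < 1 / σ - 1 / s := by
      have h1 : 1 / s < 1 / σ := by
        apply one_div_lt_one_div_of_lt hσ0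
        linarith
      linarith
    set e' := 1 / σ - 1 / s with he'def
    set R := max 1 ((2 * c / τ₀) ^ (1 / e')) with hRdef
    have hR1 : (1 : ℝ) ≤ R := le_max_left _ _
    refine ⟨c * R ^ (1 / s), fun r hr => ?_⟩
    rcases le_total r R with h | h
    · have h1 : c * r ^ (1 / s) ≤ c * R ^ (1 / s) :=
        mul_le_mul_of_nonneg_left (Real.rpow_le_rpow hr h (by positivity)) hc.le
      have h2 : 0 ≤ τ₀ / 2 * r ^ (1 / σ) := by positivity
      linarith
    · have hr1 : (1 : ℝ) ≤ r := hR1.trans h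
      have hr0 : (0 : ℝ) < r := by linarith
      have hre : 2 * c / τ₀ ≤ r ^ e' := by
        have h3 : (2 * c / τ₀) ^ (1 / e') ≤ r := (le_max_right _ _).trans h
        calc 2 * c / τ₀ = ((2 * c / τ₀) ^ (1 / e')) ^ e' := by
              rw [one_div, Real.rpow_inv_rpow (by positivity) (ne_of_gt he')]
          _ ≤ r ^ e' := Real.rpow_le_rpow (by positivity) h3 he'.le
      have h4 : c ≤ τ₀ / 2 * r ^ e' := by
        rw [div_le_iff₀ hτ₀0] at hre
        nlinarith
      have key : c * r ^ (1 / s) ≤ τ₀ / 2 * r ^ (1 / σ) := by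
        have hsplit : r ^ (1 / σ) = r ^ e' * r ^ (1 / s) := by
          rw [← Real.rpow_add hr0]
          congr 1
          rw [he'def]; ring
        rw [hsplit]
        calc c * r ^ (1 / s) ≤ (τ₀ / 2 * r ^ e') * r ^ (1 / s) :=
              mul_le_mul_of_nonneg_right h4 (by positivity)
          _ = τ₀ / 2 * (r ^ e' * r ^ (1 / s)) := by ring
      have h2 : 0 ≤ c * R ^ (1 / s) := by positivity
      linarith
  refine ⟨C * Real.exp 1 * Real.exp K, A, τ₀ / 2, by positivity, hA, by positivity, ?_⟩
  intro α β x ξ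
  set X := Real.sqrt (1 + ‖x‖ ^ 2) with hXdef
  set Ξ := Real.sqrt (1 + ‖ξ‖ ^ 2) with hΞdef
  have hX1 : 1 ≤ X := by
    rw [hXdef]
    calc (1 : ℝ) = Real.sqrt 1 := Real.sqrt_one.symm
      _ ≤ _ := Real.sqrt_le_sqrt (by nlinarith [sq_nonneg ‖x‖])
  have hΞ1 : 1 ≤ Ξ := by
    rw [hΞdef]
    calc (1 : ℝ) = Real.sqrt 1 := Real.sqrt_one.symm
      _ ≤ _ := Real.sqrt_le_sqrt (by nlinarith [sq_nonneg ‖ξ‖])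
  set P := Ξ * X with hPdef
  have hP1 : 1 ≤ P := by nlinarith
  have hP0 : (0 : ℝ) < P := by linarith
  set t := (P / B₂) ^ (1 / σ) with htdef
  have ht0 : 0 ≤ t := Real.rpow_nonneg (by positivity) _
  set N := ⌊t⌋₊ with hNdef
  have hNt : (N : ℝ) ≤ t := Nat.floor_le ht0
  have htσ : t ^ σ = P / B₂ := by
    rw [htdef, one_div, Real.rpow_inv_rpow (by positivity) hσ0.ne']
  have hNσ : (N : ℝ) ^ σ ≤ P / B₂ := by
    rw [← htσ]
    exact Real.rpow_le_rpow (Nat.cast_nonneg N) hNt hσ0.le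
  have hcond : B * (N : ℝ) ^ σ ≤ Ξ * X := by
    calc B * (N : ℝ) ^ σ ≤ B₂ * (P / B₂) :=
          mul_le_mul hB₂B hNσ (Real.rpow_nonneg (Nat.cast_nonneg N) σ) hB₂0.le
      _ = P := by field_simp
  have hbound := ha α β N x ξ hcond
  rw [← hXdef, ← hΞdef] at hbound
  -- factorial estimate
  have hfac : (Nat.factorial N : ℝ) ^ σ ≤ ((N : ℝ) ^ σ) ^ N := by
    calc (Nat.factorial N : ℝ) ^ σ ≤ ((N : ℝ) ^ (N : ℕ)) ^ σ := by
          apply Real.rpow_le_rpow (by positivity) ?_ hσ0.le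
          exact_mod_cast Nat.factorial_le_pow N
      _ = ((N : ℝ) ^ σ) ^ (N : ℕ) := by
          rw [← Real.rpow_natCast ((N : ℝ)) N, ← Real.rpow_natCast ((N : ℝ) ^ σ) N,
            ← Real.rpow_mul (Nat.cast_nonneg N), ← Real.rpow_mul (Nat.cast_nonneg N), mul_comm]
  have hstep : A ^ (2 * N) * (Nat.factorial N : ℝ) ^ σ * P ^ (-(N : ℝ)) ≤
      Real.exp 1 * Real.exp (-t) := by
    have h1 : ((N : ℝ) ^ σ) ^ N ≤ (P / B₂) ^ N :=
      pow_le_pow_left₀ (Real.rpow_nonneg (Nat.cast_nonneg N) σ) hNσ N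
    have h2 : P ^ (-(N : ℝ)) = (P ^ N)⁻¹ := by
      rw [Real.rpow_neg hP0.le, Real.rpow_natCast]
    have hAB : A ^ 2 / B₂ ≤ (Real.exp 1)⁻¹ := by
      rw [div_le_iff₀ hB₂0]
      have he : (Real.exp 1)⁻¹ * (Real.exp 1 * A ^ 2) = A ^ 2 := by
        field_simp
      have hm := mul_le_mul_of_nonneg_left hB₂A (inv_nonneg.mpr (Real.exp_pos 1).le)
      linarith
    calc A ^ (2 * N) * (Nat.factorial N : ℝ) ^ σ * P ^ (-(N : ℝ))
        ≤ A ^ (2 * N) * (P / B₂) ^ N * (P ^ N)⁻¹ := by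
          rw [h2]
          gcongr
          · exact hfac.trans h1
      _ = (A ^ 2 * (P / B₂) * P⁻¹) ^ N := by
          rw [pow_mul, ← inv_pow, ← mul_pow, ← mul_pow]
      _ = (A ^ 2 / B₂) ^ N := by
          congr 1
          field_simp
      _ ≤ ((Real.exp 1)⁻¹) ^ N := pow_le_pow_left₀ (by positivity) hAB N
      _ = Real.exp (-(N : ℝ)) := by
          rw [← Real.exp_neg, ← Real.exp_nat_mul]
          ring_nf
      _ ≤ Real.exp 1 * Real.exp (-t) := by
          rw [← Real.exp_add]
          apply Real.exp_le_exp.mpr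
          have := Nat.sub_one_lt_floor t
          rw [← hNdef] at this
          linarith
  -- exponent estimates
  set a1 := ‖x‖ ^ (1 / σ) with ha1def
  set b1 := ‖ξ‖ ^ (1 / σ) with hb1def
  set u := P ^ (1 / σ) with hudef
  have htu : t = τ₀ * u := by
    rw [htdef, Real.div_rpow hP0.le hB₂0.le, hτ₀def, hudef]
    ring
  have hxP : ‖x‖ ≤ P := by
    have h1 : ‖x‖ ≤ X := by
      rw [hXdef]
      calc ‖x‖ = Real.sqrt (‖x‖ ^ 2) := (Real.sqrt_sq (norm_nonneg x)).symm
        _ ≤ _ := Real.sqrt_le_sqrt (by linarith)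
    calc ‖x‖ ≤ X := h1
      _ ≤ P := le_mul_of_one_le_left (by linarith) hΞ1
  have hξP : ‖ξ‖ ≤ P := by
    have h1 : ‖ξ‖ ≤ Ξ := by
      rw [hΞdef]
      calc ‖ξ‖ = Real.sqrt (‖ξ‖ ^ 2) := (Real.sqrt_sq (norm_nonneg ξ)).symm
        _ ≤ _ := Real.sqrt_le_sqrt (by linarith)
    calc ‖ξ‖ ≤ Ξ := h1
      _ ≤ P := le_mul_of_one_le_right (by linarith) hX1
  have hau : a1 ≤ u := Real.rpow_le_rpow (norm_nonneg x) hxP (by positivity)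
  have hbu : b1 ≤ u := Real.rpow_le_rpow (norm_nonneg ξ) hξP (by positivity)
  have hexpfinal : Real.exp (-t) * Real.exp (c * ‖x‖ ^ (1 / s)) ≤
      Real.exp K * Real.exp (-(τ₀ / 2 / 2) * (a1 + b1)) := by
    rw [← Real.exp_add, ← Real.exp_add]
    apply Real.exp_le_exp.mpr
    have h5 := hK ‖x‖ (norm_nonneg x)
    rw [← ha1def] at h5
    have hq : 3 / 4 * a1 + 1 / 4 * b1 ≤ u := by linarith
    have hm : τ₀ * (3 / 4 * a1 + 1 / 4 * b1) ≤ τ₀ * u :=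
      mul_le_mul_of_nonneg_left hq hτ₀0.le
    rw [htu]
    linarith
  -- assembling
  have hSα : Ξ ^ (-((∑ i, α i : ℝ) + N)) ≤ Ξ ^ (-(N : ℝ)) := by
    apply Real.rpow_le_rpow_of_exponent_le hΞ1
    have h0 : (0 : ℝ) ≤ (∑ i, α i : ℝ) := by positivity
    linarith
  have hSβ : X ^ (-((∑ i, β i : ℝ) + N)) ≤ X ^ (-(N : ℝ)) := by
    apply Real.rpow_le_rpow_of_exponent_le hX1
    have h0 : (0 : ℝ) ≤ (∑ i, β i : ℝ) := by positivity
    linarith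
  have hP2 : Ξ ^ (-(N : ℝ)) * X ^ (-(N : ℝ)) = P ^ (-(N : ℝ)) :=
    (Real.mul_rpow (by positivity) (by positivity)).symm
  have hfΞ : (0 : ℝ) < Ξ := by linarith
  have hfX : (0 : ℝ) < X := by linarith
  calc |mderivXi α (mderivX β a) (x, ξ)|
      ≤ C * A ^ (∑ i, α i + ∑ i, β i + 2 * N) * (mfact α : ℝ) ^ μ * (mfact β : ℝ) ^ ν *
          (Nat.factorial N : ℝ) ^ σ * Ξ ^ (-((∑ i, α i : ℝ) + N)) *
          X ^ (-((∑ i, β i : ℝ) + N)) * Real.exp (c * ‖x‖ ^ (1 / s)) := hbound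
    _ ≤ C * A ^ (∑ i, α i + ∑ i, β i + 2 * N) * (mfact α : ℝ) ^ μ * (mfact β : ℝ) ^ ν *
          (Nat.factorial N : ℝ) ^ σ * Ξ ^ (-(N : ℝ)) *
          X ^ (-(N : ℝ)) * Real.exp (c * ‖x‖ ^ (1 / s)) := by
        gcongr
    _ = (A ^ (∑ i, α i + ∑ i, β i) * (mfact α : ℝ) ^ μ * (mfact β : ℝ) ^ ν) *
          (C * ((A ^ (2 * N) * (Nat.factorial N : ℝ) ^ σ * P ^ (-(N : ℝ))) *
            Real.exp (c * ‖x‖ ^ (1 / s)))) := by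
        rw [← hP2, pow_add]
        ring
    _ ≤ (A ^ (∑ i, α i + ∑ i, β i) * (mfact α : ℝ) ^ μ * (mfact β : ℝ) ^ ν) *
          (C * ((Real.exp 1 * Real.exp (-t)) * Real.exp (c * ‖x‖ ^ (1 / s)))) := by
        gcongr
    _ = (A ^ (∑ i, α i + ∑ i, β i) * (mfact α : ℝ) ^ μ * (mfact β : ℝ) ^ ν) *
          (C * Real.exp 1 * (Real.exp (-t) * Real.exp (c * ‖x‖ ^ (1 / s)))) := by ring
    _ ≤ (A ^ (∑ i, α i + ∑ i, β i) * (mfact α : ℝ) ^ μ * (mfact β : ℝ) ^ ν) *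
          (C * Real.exp 1 * (Real.exp K * Real.exp (-(τ₀ / 2 / 2) * (a1 + b1)))) := by
        gcongr
    _ = C * Real.exp 1 * Real.exp K * A ^ (∑ i, α i + ∑ i, β i) * (mfact α : ℝ) ^ μ *
          (mfact β : ℝ) ^ ν * Real.exp (-(τ₀ / 2 / 2) * (a1 + b1)) := by ring
end
end
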